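/- arXiv:2302.06189 — 4 statements merged into one kernel-verified Lean document; each statement's English description precedes it below -/
import Mathlib

section
/- Let ψ : X → (−∞,+∞] be defined by ψ(x) = ∫₀ᵀ c²(1 − √(1 − |ẋ(t)|²/c²)) dt if ‖ẋ‖_∞ ≤ c, and ψ(x) = +∞ otherwise. Then ψ is lower semicontinuous with respect to uniform convergence: if x ∈ X and {x_n} is a sequence with ‖ẋ_n‖_∞ ≤ c for all n and x_n → x uniformly on [0,T], then ‖ẋ‖_∞ ≤ c and ψ(x) ≤ liminf_{n→∞} ψ(x_n). -/
open Filter Topology Set MeasureTheory Function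
open scoped ENNReal NNReal

noncomputable section

namespace LFE

/-- `ℝ³` with the Euclidean norm. -/
abbrev E3 : Type := EuclideanSpace ℝ (Fin 3)

def toFn (u : E3) : Fin 3 → ℝ := (WithLp.equiv 2 (Fin 3 → ℝ)) u

def fromFn (f : Fin 3 → ℝ) : E3 := (WithLp.equiv 2 (Fin 3 → ℝ)).symm f

/-- Euclidean inner product on `ℝ³`. -/
def dot (u v : E3) : ℝ := ∑ i, toFn u i * toFn v i

/-- Cross product on `ℝ³`. -/
def cross (u v : E3) : E3 :=
  fromFn ![toFn u 1 * toFn v 2 - toFn u 2 * toFn v 1,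
           toFn u 2 * toFn v 0 - toFn u 0 * toFn v 2,
           toFn u 0 * toFn v 1 - toFn u 1 * toFn v 0]

/-- Partial derivative `∂ᵢ Fⱼ` of a vector field on `ℝ³`. -/
def pd (F : E3 → E3) (x : E3) (i j : Fin 3) : ℝ :=
  toFn (fderiv ℝ F x (EuclideanSpace.single i 1)) j

/-- Curl of a vector field on `ℝ³`. -/
def curl (F : E3 → E3) (x : E3) : E3 :=
  fromFn ![pd F x 1 2 - pd F x 2 1, pd F x 2 0 - pd F x 0 2, pd F x 0 1 - pd F x 1 0]

/-- Transpose of the Jacobian of `F` at `x`, applied to the vector `v`. -/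
def jacT (F : E3 → E3) (x v : E3) : E3 :=
  fromFn fun i => dot (fderiv ℝ F x (EuclideanSpace.single i 1)) v

/-- The open set `Ω = {(t,x) : x ≠ rⱼ(t) for all j}`. -/
def Omega (N : ℕ) (r : Fin N → ℝ → E3) : Set (ℝ × E3) := {p | ∀ i, p.2 ≠ r i p.1}

/-- The basic setting: `T`-periodic `C¹` curves of singularities `r i`, moving slower than
light and never colliding, together with `C¹`, `T`-periodic (in time) potentials `V`, `A`
defined on `Ω`. -/
structure Setting (T c : ℝ) (N : ℕ) where
  r : Fin N → ℝ → E3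
  V : ℝ → E3 → ℝ
  A : ℝ → E3 → E3
  hT : 0 < T
  hc : 0 < c
  hr_per : ∀ i, Periodic (r i) T
  hr_C1 : ∀ i, ContDiff ℝ 1 (r i)
  hr_speed : ∀ i, ∃ b, b < c ∧ ∀ t, ‖deriv (r i) t‖ ≤ b
  hr_sep : ∀ i j, i ≠ j → ∀ t ∈ Icc (0:ℝ) T, r i t ≠ r j t
  hV_per : ∀ t x, V (t + T) x = V t x
  hA_per : ∀ t x, A (t + T) x = A t x
  hV_C1 : ContDiffOn ℝ 1 (fun p : ℝ × E3 => V p.1 p.2) (Omega N r)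
  hA_C1 : ContDiffOn ℝ 1 (fun p : ℝ × E3 => A p.1 p.2) (Omega N r)

variable {T c : ℝ} {N : ℕ}

/-- Condition (V): `V < 0` on `Ω` and `V` has a Keplerian blow-up at the singularities. -/
def CondV (S : Setting T c N) : Prop :=
  (∀ p ∈ Omega N S.r, S.V p.1 p.2 < 0) ∧
  ∃ κ > (0:ℝ), ∃ δ > (0:ℝ), ∀ i, ∀ p ∈ Omega N S.r,
    ‖p.2 - S.r i p.1‖ < δ → S.V p.1 p.2 ≤ -κ / ‖p.2 - S.r i p.1‖

/-- Condition (AV1): `|A| ≤ -(κ'/c) V` on `Ω` for some `κ' ∈ (0,1)`. -/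
def CondAV1 (S : Setting T c N) : Prop :=
  ∃ κ' : ℝ, 0 < κ' ∧ κ' < 1 ∧ ∀ p ∈ Omega N S.r, ‖S.A p.1 p.2‖ ≤ -(κ' / c) * S.V p.1 p.2

/-- Condition (AV2): `|V| + |∇ₓV + ∂ₜA| + |curlₓ A| → 0` as `|x| → ∞`, uniformly in `t`. -/
def CondAV2 (S : Setting T c N) : Prop :=
  ∀ ε > (0:ℝ), ∃ R : ℝ, ∀ p ∈ Omega N S.r, R < ‖p.2‖ →
    |S.V p.1 p.2| + ‖gradient (S.V p.1) p.2 + deriv (fun s => S.A s p.2) p.1‖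
      + ‖curl (S.A p.1) p.2‖ < ε

/-- `x` is a classical `T`-periodic solution of the Lorentz force equation
`d/dt (ẋ/√(1-|ẋ|²/c²)) = E(t,x) + ẋ × B(t,x)`, with
`E = -∇ₓV - ∂ₜA` and `B = curlₓ A`, avoiding the singularities. -/
def IsSolution (S : Setting T c N) (x : ℝ → E3) : Prop :=
  Periodic x T ∧ ContDiff ℝ 1 x ∧ (∀ t, (t, x t) ∈ Omega N S.r) ∧
  (∀ t, ‖deriv x t‖ < c) ∧
  ∀ t : ℝ, HasDerivAt (fun s => (Real.sqrt (1 - ‖deriv x s‖ ^ 2 / c ^ 2))⁻¹ • deriv x s)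
    (-(gradient (S.V t) (x t)) - deriv (fun s => S.A s (x t)) t
      + cross (deriv x t) (curl (S.A t) (x t))) t

/-- Membership in `X = {x ∈ W^{1,∞}(0,T;ℝ³) : x(0) = x(T)}`, identified with the space of
`T`-periodic Lipschitz paths. -/
def MemX (T : ℝ) (x : ℝ → E3) : Prop := Periodic x T ∧ ∃ K : ℝ≥0, LipschitzWith K x

/-- `‖x‖_∞` on `[0,T]`. -/
def supN (T : ℝ) (x : ℝ → E3) : ℝ := sSup ((fun t => ‖x t‖) '' Icc 0 T)

/-- `‖ẋ‖_∞` (essential supremum on `[0,T]`). -/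
def derN (T : ℝ) (x : ℝ → E3) : ℝ := (eLpNorm (deriv x) ⊤ (volume.restrict (Icc 0 T))).toReal

/-- The norm of `X`: `‖x‖ = ‖x‖_∞ + ‖ẋ‖_∞`. -/
def Xnorm (T : ℝ) (x : ℝ → E3) : ℝ := supN T x + derN T x

/-- Distance induced by the norm of `X`. -/
def Xdist (T : ℝ) (x y : ℝ → E3) : ℝ := Xnorm T (fun t => x t - y t)

/-- `D_ψ = {x ∈ X : ‖ẋ‖_∞ ≤ c}`, i.e. `x` is `c`-Lipschitz. -/
def MemDpsi (T c : ℝ) (x : ℝ → E3) : Prop := MemX T x ∧ LipschitzWith (Real.toNNReal c) x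

/-- The (finite part of the) kinetic functional `ψ`. -/
def psiVal (T c : ℝ) (x : ℝ → E3) : ℝ :=
  ∫ t in (0:ℝ)..T, c ^ 2 * (1 - Real.sqrt (1 - ‖deriv x t‖ ^ 2 / c ^ 2))

open Classical in
/-- The extended-real-valued functional `ψ`. -/
def psiE (T c : ℝ) (x : ℝ → E3) : EReal :=
  if MemDpsi T c x then (psiVal T c x : EReal) else ⊤

/-- `Λ = {x ∈ X : (t, x(t)) ∈ Ω for all t ∈ [0,T]}`. -/
def MemLambda (T : ℝ) {N : ℕ} (r : Fin N → ℝ → E3) (x : ℝ → E3) : Prop :=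
  MemX T x ∧ ∀ t ∈ Icc (0:ℝ) T, (t, x t) ∈ Omega N r

/-- The (finite part of the) potential functional `Φ`. -/
def phiVal (T : ℝ) (V : ℝ → E3 → ℝ) (A : ℝ → E3 → E3) (x : ℝ → E3) : ℝ :=
  ∫ t in (0:ℝ)..T, (-(V t (x t)) + dot (A t (x t)) (deriv x t))

open Classical in
/-- The extended-real-valued functional `Φ`. -/
def phiE (T : ℝ) {N : ℕ} (r : Fin N → ℝ → E3) (V : ℝ → E3 → ℝ) (A : ℝ → E3 → E3)
    (x : ℝ → E3) : EReal :=
  if MemLambda T r x then (phiVal T V A x : EReal) else ⊤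

/-- The action functional `I = ψ + Φ`. -/
def IE (T c : ℝ) {N : ℕ} (r : Fin N → ℝ → E3) (V : ℝ → E3 → ℝ) (A : ℝ → E3 → E3)
    (x : ℝ → E3) : EReal :=
  psiE T c x + phiE T r V A x

/-- The differential of `Φ` at `x ∈ Λ` in the direction `y`. -/
def dPhi (T : ℝ) (V : ℝ → E3 → ℝ) (A : ℝ → E3 → E3) (x y : ℝ → E3) : ℝ :=
  ∫ t in (0:ℝ)..T,
    (-(dot (gradient (V t) (x t)) (y t)) + dot (A t (x t)) (deriv y t)
      + dot (jacT (A t) (x t) (deriv x t)) (y t))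

end LFE



section Aux
open Filter Topology Set MeasureTheory Function intervalIntegral Metric


section StepA
variable {E : Type*} [NormedAddCommGroup E]

lemma shift_per {T : ℝ} {y : ℝ → E} (hper : Periodic y T) (u : ℝ) : y u = y (u - T) := by
  conv_lhs => rw [show u = u - T + T by ring]
  exact hper (u - T)

lemma shift_per_int {T : ℝ} {y : ℝ → E} (hper : Periodic y T) (u : ℝ) (k : ℤ) :
    y u = y (u - k * T) := by
  conv_lhs => rw [show u = u - k * T + k * T by ring]
  exact hper.int_mul k (u - k * T)

/-- A periodic function Lipschitz on a period interval is globally Lipschitz. -/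
lemma lipschitzWith_of_periodic {T c : ℝ} (hT : 0 < T) (hc : 0 ≤ c) {y : ℝ → E}
    (hper : Periodic y T)
    (h : ∀ s ∈ Icc (0:ℝ) T, ∀ t ∈ Icc (0:ℝ) T, s ≤ t → dist (y s) (y t) ≤ c * (t - s)) :
    LipschitzWith (Real.toNNReal c) y := by
  have key : ∀ n : ℕ, ∀ s t : ℝ, 0 ≤ s → s ≤ t → t ≤ (n + 1) * T →
      dist (y s) (y t) ≤ c * (t - s) := by
    intro n
    induction n with
    | zero =>
      intro s t hs hst ht
      norm_num at ht
      exact h s ⟨hs, hst.trans ht⟩ t ⟨hs.trans hst, ht⟩ hst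
    | succ n ih =>
      intro s t hs hst ht
      push_cast at ht
      by_cases htT : t ≤ T
      · exact h s ⟨hs, hst.trans htT⟩ t ⟨hs.trans hst, htT⟩ hst
      push_neg at htT
      by_cases hsT : T ≤ s
      · rw [shift_per hper s, shift_per hper t]
        have := ih (s - T) (t - T) (by linarith) (by linarith) (by push_cast; linarith)
        calc dist (y (s - T)) (y (t - T)) ≤ c * (t - T - (s - T)) := this
          _ = c * (t - s) := by ring_nf
      · push_neg at hsT
        have e0 : y T = y 0 := by simpa using hper 0
        calc dist (y s) (y t) ≤ dist (y s) (y T) + dist (y T) (y t) := dist_triangle _ _ _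
          _ ≤ c * (T - s) + c * (t - T) := by
              refine add_le_add (h s ⟨hs, hsT.le⟩ T ⟨hT.le, le_refl T⟩ hsT.le) ?_
              rw [e0, shift_per hper t]
              have := ih 0 (t - T) le_rfl (by linarith) (by push_cast; linarith)
              simpa using this
          _ = c * (t - s) := by ring
  have main : ∀ s t : ℝ, s ≤ t → dist (y s) (y t) ≤ c * (t - s) := by
    intro s t hst
    set k : ℤ := ⌊s / T⌋ with hk
    have hs' : 0 ≤ s - k * T := Int.sub_floor_div_mul_nonneg s hT
    obtain ⟨n, hn⟩ := exists_nat_ge ((t - k * T) / T)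
    have hnT : t - k * T ≤ (n + 1) * T := by
      have h1 : t - k * T ≤ n * T := (div_le_iff₀ hT).1 hn
      nlinarith [hT.le]
    rw [shift_per_int hper s k, shift_per_int hper t k]
    have := key n (s - k * T) (t - k * T) hs' (by linarith) hnT
    calc dist (y (s - k * T)) (y (t - k * T)) ≤ c * (t - k * T - (s - k * T)) := this
      _ = c * (t - s) := by ring_nf
  refine LipschitzWith.of_dist_le_mul fun s t => ?_
  rw [Real.coe_toNNReal c hc]
  rcases le_total s t with hst | hst
  · calc dist (y s) (y t) ≤ c * (t - s) := main s t hst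
      _ = c * dist s t := by rw [dist_comm, Real.dist_eq, abs_of_nonneg (by linarith)]
  · calc dist (y s) (y t) = dist (y t) (y s) := dist_comm _ _
      _ ≤ c * (s - t) := main t s hst
      _ = c * dist s t := by rw [Real.dist_eq, abs_of_nonneg (by linarith)]

end StepA


section StepB

lemma norm_deriv_le_of_lip {F : Type*} [NormedAddCommGroup F] [NormedSpace ℝ F]
    {K : NNReal} {f : ℝ → F} (h : LipschitzWith K f) (t : ℝ) : ‖deriv f t‖ ≤ K := by
  have h1 : deriv f t = fderiv ℝ f t 1 := rfl
  rw [h1]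
  calc ‖fderiv ℝ f t 1‖ ≤ ‖fderiv ℝ f t‖ * ‖(1:ℝ)‖ := (fderiv ℝ f t).le_opNorm 1
    _ ≤ K := by simpa using norm_fderiv_le_of_lipschitz ℝ h

lemma deriv_nonneg_of_monotone {ψ : ℝ → ℝ} (hm : Monotone ψ) (t : ℝ) : 0 ≤ deriv ψ t := by
  by_cases hd : DifferentiableAt ℝ ψ t
  · have hs : Tendsto (slope ψ t) (𝓝[>] t) (𝓝 (deriv ψ t)) :=
      (hasDerivAt_iff_tendsto_slope.1 hd.hasDerivAt).mono_left
        (nhdsWithin_mono t fun y hy => ne_of_gt hy)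
    refine ge_of_tendsto hs ?_
    filter_upwards [self_mem_nhdsWithin] with y hy
    have h2 : (0:ℝ) < y - t := sub_pos.2 hy
    rw [slope_def_field]
    exact div_nonneg (sub_nonneg.2 (hm (le_of_lt hy))) h2.le
  · simp [deriv_zero_of_not_differentiableAt hd]

lemma intervalIntegrable_deriv_of_lip {F : Type*} [NormedAddCommGroup F] [NormedSpace ℝ F]
    [CompleteSpace F] [MeasurableSpace F] [BorelSpace F] [SecondCountableTopology F]
    {K : NNReal} {f : ℝ → F} (h : LipschitzWith K f) (a b : ℝ) :
    IntervalIntegrable (deriv f) volume a b := by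
  rw [intervalIntegrable_iff]
  haveI : IsFiniteMeasure (volume.restrict (Set.uIoc a b)) := by
    constructor
    rw [Measure.restrict_apply_univ]
    exact measure_Ioc_lt_top
  refine Integrable.mono' (integrable_const (K:ℝ)) ((measurable_deriv f).aestronglyMeasurable) ?_
  exact Eventually.of_forall fun t => norm_deriv_le_of_lip h t

/-- Fatou-type inequality: for a monotone Lipschitz function the integral of the derivative
is at most the increment. -/
lemma integral_deriv_le_of_monotone_lip {K : NNReal} {ψ : ℝ → ℝ} (hm : Monotone ψ)
    (hl : LipschitzWith K ψ) {a b : ℝ} (hab : a ≤ b) :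
    ∫ t in a..b, deriv ψ t ≤ ψ b - ψ a := by
  have hcont : Continuous ψ := hl.continuous
  set Q : ℕ → ℝ → ℝ := fun k t => ((k:ℝ) + 1) * (ψ (t + 1/((k:ℝ)+1)) - ψ t) with hQ
  have hQcont : ∀ k, Continuous (Q k) := by
    intro k
    exact continuous_const.mul ((hcont.comp (continuous_id.add continuous_const)).sub hcont)
  have hQnn : ∀ k t, 0 ≤ Q k t := by
    intro k t
    have hk : (0:ℝ) < 1/((k:ℝ)+1) := by positivity
    have h1 : ψ t ≤ ψ (t + 1/((k:ℝ)+1)) := hm (by linarith)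
    have hk2 : (0:ℝ) ≤ (k:ℝ) + 1 := by positivity
    exact mul_nonneg hk2 (by linarith)
  have hptwise : ∀ t, DifferentiableAt ℝ ψ t →
      Tendsto (fun k : ℕ => Q k t) atTop (𝓝 (deriv ψ t)) := by
    intro t ht
    have hslope : Tendsto (slope ψ t) (𝓝[≠] t) (𝓝 (deriv ψ t)) :=
      hasDerivAt_iff_tendsto_slope.1 ht.hasDerivAt
    have hy : Tendsto (fun k : ℕ => t + 1/((k:ℝ)+1)) atTop (𝓝[≠] t) := by
      refine tendsto_nhdsWithin_of_tendsto_nhds_of_eventually_within _ ?_ ?_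
      · have h0 := tendsto_one_div_add_atTop_nhds_zero_nat (𝕜 := ℝ)
        have h2 : Tendsto (fun k : ℕ => t + 1/((k:ℝ)+1)) atTop (𝓝 (t + 0)) :=
          tendsto_const_nhds.add h0
        simpa using h2
      · refine Eventually.of_forall fun k => ?_
        have hk : (0:ℝ) < 1/((k:ℝ)+1) := by positivity
        simp only [mem_compl_iff, mem_singleton_iff]
        intro h
        nlinarith [congrArg (fun z : ℝ => z - t) h]
    have hcomp := hslope.comp hy
    refine hcomp.congr fun k => ?_
    have hk : (0:ℝ) < 1/((k:ℝ)+1) := by positivity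
    rw [Function.comp_apply, slope_def_field,
      show t + 1/((k:ℝ)+1) - t = 1/((k:ℝ)+1) by ring]
    simp only [hQ]
    rw [one_div, div_inv_eq_mul, mul_comm]
  have hstep : ∀ k : ℕ, ∫ t in a..b, Q k t ≤ ψ (b + 1/((k:ℝ)+1)) - ψ a := by
    intro k
    set h : ℝ := 1/((k:ℝ)+1) with hh
    have hhpos : 0 < h := by positivity
    have hint : ∀ u v : ℝ, IntervalIntegrable ψ volume u v := fun u v =>
      hcont.intervalIntegrable u v
    have hint2 : IntervalIntegrable (fun t => ψ (t + h)) volume a b :=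
      (hcont.comp (continuous_id.add continuous_const)).intervalIntegrable a b
    have e1 : ∫ t in a..b, Q k t = ((k:ℝ)+1) * ((∫ t in a..b, ψ (t+h)) - ∫ t in a..b, ψ t) := by
      rw [← intervalIntegral.integral_sub hint2 (hint a b), ← intervalIntegral.integral_const_mul]
    have e2 : (∫ t in a..b, ψ (t+h)) = ∫ t in (a+h)..(b+h), ψ t :=
      intervalIntegral.integral_comp_add_right ψ h
    have e3 : (∫ t in (a+h)..(b+h), ψ t) - (∫ t in a..b, ψ t)
        = (∫ t in b..(b+h), ψ t) - ∫ t in a..(a+h), ψ t := by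
      have c1 : (∫ t in a..(a+h), ψ t) + (∫ t in (a+h)..(b+h), ψ t) = ∫ t in a..(b+h), ψ t :=
        intervalIntegral.integral_add_adjacent_intervals (hint _ _) (hint _ _)
      have c2 : (∫ t in a..b, ψ t) + (∫ t in b..(b+h), ψ t) = ∫ t in a..(b+h), ψ t :=
        intervalIntegral.integral_add_adjacent_intervals (hint _ _) (hint _ _)
      linarith
    have b1 : (∫ t in b..(b+h), ψ t) ≤ h * ψ (b+h) := by
      have hmono := intervalIntegral.integral_mono_on (by linarith : b ≤ b + h) (hint b (b+h))
        intervalIntegrable_const (g := fun _ => ψ (b+h)) (fun t ht => hm ht.2)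
      rw [intervalIntegral.integral_const, smul_eq_mul, show b + h - b = h by ring] at hmono
      exact hmono
    have b2 : h * ψ a ≤ ∫ t in a..(a+h), ψ t := by
      have hmono := intervalIntegral.integral_mono_on (by linarith : a ≤ a + h)
        intervalIntegrable_const (hint a (a+h)) (f := fun _ => ψ a) (fun t ht => hm ht.1)
      rw [intervalIntegral.integral_const, smul_eq_mul, show a + h - a = h by ring] at hmono
      exact hmono
    have hk1 : ((k:ℝ)+1) * h = 1 := by rw [hh]; field_simp
    calc ∫ t in a..b, Q k t = ((k:ℝ)+1) * ((∫ t in b..(b+h), ψ t) - ∫ t in a..(a+h), ψ t) := by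
          rw [e1, e2, e3]
      _ ≤ ((k:ℝ)+1) * (h * ψ (b+h) - h * ψ a) := by
          have hk : (0:ℝ) < (k:ℝ)+1 := by positivity
          apply mul_le_mul_of_nonneg_left (by linarith) hk.le
      _ = ψ (b+h) - ψ a := by rw [mul_sub, ← mul_assoc, ← mul_assoc, hk1]; ring
  -- now the lintegral Fatou chain
  have hdiff : ∀ᵐ t ∂(volume : Measure ℝ), DifferentiableAt ℝ ψ t := hl.ae_differentiableAt
  have hderiv_int : IntervalIntegrable (deriv ψ) volume a b := intervalIntegrable_deriv_of_lip hl a b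
  have hIoc : IntegrableOn (deriv ψ) (Ioc a b) volume := by
    have := hderiv_int
    rwa [intervalIntegrable_iff, uIoc_of_le hab] at this
  have keyL : ENNReal.ofReal (∫ t in Ioc a b, deriv ψ t) ≤ ENNReal.ofReal (ψ b - ψ a) := by
    have l1 : ENNReal.ofReal (∫ t in Ioc a b, deriv ψ t)
        = ∫⁻ t in Ioc a b, ENNReal.ofReal (deriv ψ t) := by
      refine MeasureTheory.ofReal_integral_eq_lintegral_ofReal hIoc ?_
      exact Eventually.of_forall fun t => deriv_nonneg_of_monotone hm t
    have l2 : (∫⁻ t in Ioc a b, ENNReal.ofReal (deriv ψ t))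
        = ∫⁻ t in Ioc a b, liminf (fun k : ℕ => ENNReal.ofReal (Q k t)) atTop := by
      refine lintegral_congr_ae ?_
      filter_upwards [ae_restrict_of_ae hdiff] with t ht
      exact (((ENNReal.continuous_ofReal.tendsto _).comp (hptwise t ht)).liminf_eq).symm
    have l3 : (∫⁻ t in Ioc a b, liminf (fun k : ℕ => ENNReal.ofReal (Q k t)) atTop)
        ≤ liminf (fun k : ℕ => ∫⁻ t in Ioc a b, ENNReal.ofReal (Q k t)) atTop :=
      lintegral_liminf_le fun k => ((hQcont k).measurable).ennreal_ofReal
    have l4 : ∀ k : ℕ, (∫⁻ t in Ioc a b, ENNReal.ofReal (Q k t))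
        = ENNReal.ofReal (∫ t in a..b, Q k t) := by
      intro k
      rw [intervalIntegral.integral_of_le hab]
      exact (MeasureTheory.ofReal_integral_eq_lintegral_ofReal
        ((hQcont k).integrableOn_Icc.mono_set Ioc_subset_Icc_self)
        (Eventually.of_forall fun t => hQnn k t)).symm
    have l5 : liminf (fun k : ℕ => ∫⁻ t in Ioc a b, ENNReal.ofReal (Q k t)) atTop
        ≤ liminf (fun k : ℕ => ENNReal.ofReal (ψ (b + 1/((k:ℝ)+1)) - ψ a)) atTop := by
      refine Filter.liminf_le_liminf (Eventually.of_forall fun k => ?_)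
      rw [l4 k]
      exact ENNReal.ofReal_le_ofReal (hstep k)
    have l6 : liminf (fun k : ℕ => ENNReal.ofReal (ψ (b + 1/((k:ℝ)+1)) - ψ a)) atTop
        = ENNReal.ofReal (ψ b - ψ a) := by
      have h0 := tendsto_one_div_add_atTop_nhds_zero_nat (𝕜 := ℝ)
      have h1 : Tendsto (fun k : ℕ => b + 1/((k:ℝ)+1)) atTop (𝓝 b) := by
        have h2 : Tendsto (fun k : ℕ => b + 1/((k:ℝ)+1)) atTop (𝓝 (b + 0)) :=
          tendsto_const_nhds.add h0
        simpa using h2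
      have h3 : Tendsto (fun k : ℕ => ψ (b + 1/((k:ℝ)+1)) - ψ a) atTop (𝓝 (ψ b - ψ a)) :=
        ((hcont.tendsto b).comp h1).sub tendsto_const_nhds
      exact ((ENNReal.continuous_ofReal.tendsto _).comp h3).liminf_eq
    calc ENNReal.ofReal (∫ t in Ioc a b, deriv ψ t)
        = ∫⁻ t in Ioc a b, ENNReal.ofReal (deriv ψ t) := l1
      _ = _ := l2
      _ ≤ _ := l3
      _ ≤ _ := l5
      _ = _ := l6
  have hnn2 : 0 ≤ ψ b - ψ a := sub_nonneg.2 (hm hab)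
  rw [intervalIntegral.integral_of_le hab]
  exact (ENNReal.ofReal_le_ofReal_iff hnn2).1 keyL

end StepB

/-- FTC for scalar Lipschitz functions. -/
lemma integral_deriv_lip_scalar {K : NNReal} {φ : ℝ → ℝ} (hl : LipschitzWith K φ)
    {a b : ℝ} (hab : a ≤ b) : ∫ t in a..b, deriv φ t = φ b - φ a := by
  have habs : ∀ s t : ℝ, s ≤ t → |φ t - φ s| ≤ K * (t - s) := by
    intro s t h
    have h0 := hl.dist_le_mul t s
    rwa [Real.dist_eq, Real.dist_eq, abs_of_nonneg (by linarith : (0:ℝ) ≤ t - s)] at h0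
  have lKid : LipschitzWith K (fun t : ℝ => (K:ℝ) * t) := by
    refine LipschitzWith.of_dist_le_mul fun s t => ?_
    rw [Real.dist_eq, Real.dist_eq, ← mul_sub, abs_mul,
      abs_of_nonneg (by positivity : (0:ℝ) ≤ (K:ℝ))]
  set ψ₁ : ℝ → ℝ := fun t => φ t + (K:ℝ) * t with hψ₁
  set ψ₂ : ℝ → ℝ := fun t => (K:ℝ) * t - φ t with hψ₂
  have hm₁ : Monotone ψ₁ := by
    intro s t h
    have := (abs_le.1 (habs s t h)).1
    simp only [hψ₁]; nlinarith
  have hm₂ : Monotone ψ₂ := by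
    intro s t h
    have := (abs_le.1 (habs s t h)).2
    simp only [hψ₂]; nlinarith
  have hl₁ : LipschitzWith (K + K) ψ₁ := hl.add lKid
  have hl₂ : LipschitzWith (K + K) ψ₂ := lKid.sub hl
  have hdiff : ∀ᵐ t ∂(volume : Measure ℝ), DifferentiableAt ℝ φ t := hl.ae_differentiableAt
  have hKid : ∀ t : ℝ, HasDerivAt (fun t : ℝ => (K:ℝ) * t) (K:ℝ) t := by
    intro t
    simpa using (hasDerivAt_id t).const_mul (K:ℝ)
  have hae₁ : ∀ᵐ t ∂(volume : Measure ℝ), deriv ψ₁ t = deriv φ t + K := by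
    filter_upwards [hdiff] with t ht
    exact (ht.hasDerivAt.add (hKid t)).deriv
  have hae₂ : ∀ᵐ t ∂(volume : Measure ℝ), deriv ψ₂ t = (K:ℝ) - deriv φ t := by
    filter_upwards [hdiff] with t ht
    exact ((hKid t).sub ht.hasDerivAt).deriv
  have hint : IntervalIntegrable (deriv φ) volume a b := intervalIntegrable_deriv_of_lip hl a b
  have e₁ : ∫ t in a..b, deriv ψ₁ t = (∫ t in a..b, deriv φ t) + (K:ℝ) * (b - a) := by
    rw [intervalIntegral.integral_congr_ae (hae₁.mono fun t ht _ => ht),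
      intervalIntegral.integral_add hint intervalIntegrable_const]
    simp [mul_comm]
  have e₂ : ∫ t in a..b, deriv ψ₂ t = (K:ℝ) * (b - a) - ∫ t in a..b, deriv φ t := by
    rw [intervalIntegral.integral_congr_ae (hae₂.mono fun t ht _ => ht),
      intervalIntegral.integral_sub intervalIntegrable_const hint]
    simp [mul_comm]
  have i₁ := integral_deriv_le_of_monotone_lip hm₁ hl₁ hab
  have i₂ := integral_deriv_le_of_monotone_lip hm₂ hl₂ hab
  rw [e₁] at i₁
  rw [e₂] at i₂
  simp only [hψ₁, hψ₂] at i₁ i₂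
  linarith

/-- FTC for Lipschitz curves in Euclidean space. -/
lemma integral_deriv_lip {n : ℕ} {K : NNReal} {y : ℝ → EuclideanSpace ℝ (Fin n)}
    (hl : LipschitzWith K y) {a b : ℝ} (hab : a ≤ b) :
    ∫ t in a..b, deriv y t = y b - y a := by
  have hdiff : ∀ᵐ t ∂(volume : Measure ℝ), DifferentiableAt ℝ y t := hl.ae_differentiableAt
  have hint : IntervalIntegrable (deriv y) volume a b := intervalIntegrable_deriv_of_lip hl a b
  have key : ∀ i : Fin n, EuclideanSpace.proj (𝕜 := ℝ) i (∫ t in a..b, deriv y t)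
      = EuclideanSpace.proj (𝕜 := ℝ) i (y b - y a) := by
    intro i
    set ℓ := EuclideanSpace.proj (𝕜 := ℝ) i with hℓ
    have hcomp : LipschitzWith (‖ℓ‖₊ * K) (fun t => ℓ (y t)) := ℓ.lipschitz.comp hl
    have hs := integral_deriv_lip_scalar hcomp hab
    have hcong : ∫ t in a..b, deriv (fun t => ℓ (y t)) t = ∫ t in a..b, ℓ (deriv y t) := by
      refine intervalIntegral.integral_congr_ae ?_
      filter_upwards [hdiff] with t ht _
      exact (ℓ.hasFDerivAt.comp_hasDerivAt t ht.hasDerivAt).deriv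
    rw [hcong, ℓ.intervalIntegral_comp_comm hint] at hs
    rw [hs, map_sub]
  have := key
  apply PiLp.ext
  intro i
  have h := key i
  simpa using h

section Kin
variable {E : Type*} [NormedAddCommGroup E] [NormedSpace ℝ E]

/-- The kinetic integrand. -/
noncomputable def kin (c : ℝ) (v : E) : ℝ := c ^ 2 * (1 - Real.sqrt (1 - ‖v‖ ^ 2 / c ^ 2))

lemma kin_nonneg {c : ℝ} (v : E) : 0 ≤ kin c v := by
  unfold kin
  have h0 : (0:ℝ) ≤ ‖v‖ ^ 2 / c ^ 2 := by positivity
  have h1 : Real.sqrt (1 - ‖v‖ ^ 2 / c ^ 2) ≤ 1 := Real.sqrt_le_one.mpr (by linarith)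
  nlinarith [sq_nonneg c]

lemma kin_le {c : ℝ} (v : E) : kin c v ≤ c ^ 2 := by
  unfold kin
  nlinarith [Real.sqrt_nonneg (1 - ‖v‖ ^ 2 / c ^ 2), sq_nonneg c]

lemma continuous_kin (c : ℝ) : Continuous (kin c : E → ℝ) := by
  unfold kin
  fun_prop

lemma convexOn_kin {c : ℝ} (hc : 0 < c) :
    ConvexOn ℝ (closedBall (0:E) c) (kin c) := by
  refine ⟨convex_closedBall _ _, fun u hu v hv θ σ hθ hσ hθσ => ?_⟩
  rw [mem_closedBall_zero_iff] at hu hv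
  have hc2 : (0:ℝ) < c ^ 2 := by positivity
  set a := 1 - ‖u‖ ^ 2 / c ^ 2 with ha_def
  set b := 1 - ‖v‖ ^ 2 / c ^ 2 with hb_def
  have ha : 0 ≤ a := by rw [ha_def]; rw [sub_nonneg, div_le_one hc2]; nlinarith [norm_nonneg u]
  have hb : 0 ≤ b := by rw [hb_def]; rw [sub_nonneg, div_le_one hc2]; nlinarith [norm_nonneg v]
  -- step 1 : squared norm convexity (two point)
  have h1 : ‖θ • u + σ • v‖ ≤ θ * ‖u‖ + σ * ‖v‖ := by
    calc ‖θ • u + σ • v‖ ≤ ‖θ • u‖ + ‖σ • v‖ := norm_add_le _ _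
      _ = θ * ‖u‖ + σ * ‖v‖ := by rw [norm_smul, norm_smul, Real.norm_eq_abs,
          Real.norm_eq_abs, abs_of_nonneg hθ, abs_of_nonneg hσ]
  have h2 : ‖θ • u + σ • v‖ ^ 2 ≤ θ * ‖u‖ ^ 2 + σ * ‖v‖ ^ 2 := by
    nlinarith [norm_nonneg (θ • u + σ • v), norm_nonneg u, norm_nonneg v, sq_nonneg (‖u‖ - ‖v‖),
      mul_nonneg hθ hσ]
  have h3 : θ * a + σ * b ≤ 1 - ‖θ • u + σ • v‖ ^ 2 / c ^ 2 := by
    have h4 : ‖θ • u + σ • v‖ ^ 2 / c ^ 2 ≤ (θ * ‖u‖ ^ 2 + σ * ‖v‖ ^ 2) / c ^ 2 := by gcongr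
    have expand : θ * a + σ * b = 1 - (θ * ‖u‖ ^ 2 + σ * ‖v‖ ^ 2) / c ^ 2 := by
      rw [ha_def, hb_def]
      field_simp
      linear_combination (c ^ 2) * hθσ
    linarith
  -- step 2 : sqrt concavity (two point)
  have h5 : θ * Real.sqrt a + σ * Real.sqrt b ≤ Real.sqrt (θ * a + σ * b) := by
    have := (Real.strictConcaveOn_sqrt.concaveOn).2 ha hb hθ hσ hθσ
    simpa [smul_eq_mul] using this
  have h6 : Real.sqrt (θ * a + σ * b) ≤ Real.sqrt (1 - ‖θ • u + σ • v‖ ^ 2 / c ^ 2) :=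
    Real.sqrt_le_sqrt h3
  have h7 : θ * Real.sqrt a + σ * Real.sqrt b ≤ Real.sqrt (1 - ‖θ • u + σ • v‖ ^ 2 / c ^ 2) :=
    h5.trans h6
  show kin c (θ • u + σ • v) ≤ θ • kin c u + σ • kin c v
  unfold kin
  rw [smul_eq_mul, smul_eq_mul, ← ha_def, ← hb_def]
  nlinarith [hc2]

end Kin

lemma integrableOn_kin_deriv {c : ℝ} {y : ℝ → LFE.E3} (hy : LipschitzWith (Real.toNNReal c) y)
    {s : Set ℝ} (hs : MeasurableSet s) (hfin : volume s < ⊤) :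
    IntegrableOn (fun t => kin c (deriv y t)) s volume := by
  haveI : IsFiniteMeasure (volume.restrict s) := by
    constructor; rwa [Measure.restrict_apply_univ]
  refine Integrable.mono' (integrable_const (c^2)) ?_ ?_
  · exact ((continuous_kin c).measurable.comp (measurable_deriv y)).aestronglyMeasurable
  · refine Eventually.of_forall fun t => ?_
    rw [Real.norm_eq_abs, abs_of_nonneg (kin_nonneg _)]
    exact kin_le _

lemma integrableOn_deriv_lip {K : NNReal} {y : ℝ → LFE.E3} (hy : LipschitzWith K y)
    {s : Set ℝ} (hs : MeasurableSet s) (hfin : volume s < ⊤) :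
    IntegrableOn (deriv y) s volume := by
  haveI : IsFiniteMeasure (volume.restrict s) := by
    constructor; rwa [Measure.restrict_apply_univ]
  refine Integrable.mono' (integrable_const (K:ℝ)) ?_ ?_
  · exact (measurable_deriv y).aestronglyMeasurable
  · exact Eventually.of_forall fun t => norm_deriv_le_of_lip hy t

/-- Jensen's inequality on one subinterval. -/
lemma jensen_piece {c : ℝ} (hc : 0 < c) {y : ℝ → LFE.E3} (hy : LipschitzWith (Real.toNNReal c) y)
    {u v : ℝ} (huv : u < v) :
    (v - u) * kin c ((v - u)⁻¹ • (y v - y u)) ≤ ∫ t in u..v, kin c (deriv y t) := by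
  set μ : Measure ℝ := volume.restrict (Ioc u v) with hμ
  haveI hfm : IsFiniteMeasure μ := by
    constructor; rw [hμ, Measure.restrict_apply_univ]; exact measure_Ioc_lt_top
  haveI hnz : NeZero μ := by
    constructor
    rw [hμ]
    intro h
    have h2 : volume (Ioc u v) = 0 := by
      rw [← Measure.restrict_apply_univ, h]; simp
    rw [Real.volume_Ioc] at h2
    exact absurd h2 (by simp [ENNReal.ofReal_eq_zero]; linarith)
  have hmeas : MeasurableSet (Ioc u v) := measurableSet_Ioc
  have hfin : volume (Ioc u v) < ⊤ := measure_Ioc_lt_top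
  have hfi : Integrable (deriv y) μ := integrableOn_deriv_lip hy hmeas hfin
  have hgi : Integrable ((kin c) ∘ (deriv y)) μ := integrableOn_kin_deriv hy hmeas hfin
  have hfs : ∀ᵐ t ∂μ, deriv y t ∈ closedBall (0:LFE.E3) c := by
    refine Eventually.of_forall fun t => ?_
    rw [mem_closedBall_zero_iff]
    have := norm_deriv_le_of_lip hy t
    rwa [Real.coe_toNNReal c hc.le] at this
  have hjen := (convexOn_kin hc).map_average_le (continuous_kin c).continuousOn
    isClosed_closedBall hfs hfi hgi
  have havg : (⨍ t, deriv y t ∂μ) = (v - u)⁻¹ • (y v - y u) := by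
    rw [average_eq, hμ, measureReal_def, Measure.restrict_apply_univ, Real.volume_Ioc,
      ENNReal.toReal_ofReal (by linarith : (0:ℝ) ≤ v - u)]
    congr 1
    rw [← intervalIntegral.integral_of_le huv.le]
    exact integral_deriv_lip hy huv.le
  have havg2 : (⨍ t, kin c (deriv y t) ∂μ) = (v - u)⁻¹ * ∫ t in u..v, kin c (deriv y t) := by
    rw [average_eq, hμ, measureReal_def, Measure.restrict_apply_univ, Real.volume_Ioc,
      ENNReal.toReal_ofReal (by linarith : (0:ℝ) ≤ v - u), smul_eq_mul,
      ← intervalIntegral.integral_of_le huv.le]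
  rw [havg] at hjen
  have hjen2 : kin c ((v - u)⁻¹ • (y v - y u)) ≤ (v - u)⁻¹ * ∫ t in u..v, kin c (deriv y t) := by
    calc kin c ((v - u)⁻¹ • (y v - y u)) ≤ ⨍ t, kin c (deriv y t) ∂μ := hjen
      _ = _ := havg2
  have hvu : (0:ℝ) < v - u := by linarith
  calc (v - u) * kin c ((v - u)⁻¹ • (y v - y u))
      ≤ (v - u) * ((v - u)⁻¹ * ∫ t in u..v, kin c (deriv y t)) :=
        mul_le_mul_of_nonneg_left hjen2 hvu.le
    _ = ∫ t in u..v, kin c (deriv y t) := by field_simp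

/-- Straddle lemma: difference quotients over shrinking intervals containing `t`
converge to the derivative. -/
lemma straddle {E : Type*} [NormedAddCommGroup E] [NormedSpace ℝ E]
    {y : ℝ → E} {t : ℝ} {L : E} (h : HasDerivAt y L t) {A B : ℕ → ℝ}
    (hA : ∀ m, A m ≤ t) (hB : ∀ m, t ≤ B m) (hAB : ∀ m, A m < B m)
    (hd : Tendsto (fun m => B m - A m) atTop (𝓝 0)) :
    Tendsto (fun m => (B m - A m)⁻¹ • (y (B m) - y (A m))) atTop (𝓝 L) := by
  rw [← tendsto_sub_nhds_zero_iff]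
  rw [NormedAddCommGroup.tendsto_nhds_zero]
  intro ε hε
  have hlo := hasDerivAt_iff_isLittleO.1 h
  have hev : ∀ᶠ s in 𝓝 t, ‖y s - y t - (s - t) • L‖ ≤ ε/4 * ‖s - t‖ :=
    hlo.def (by linarith)
  obtain ⟨δ, hδ, hball⟩ := Metric.eventually_nhds_iff.1 hev
  have hAt : Tendsto (fun m => A m) atTop (𝓝 t) := by
    have h1 : Tendsto (fun m => t - (B m - A m)) atTop (𝓝 (t - 0)) :=
      tendsto_const_nhds.sub hd
    rw [sub_zero] at h1
    refine tendsto_of_tendsto_of_tendsto_of_le_of_le h1 tendsto_const_nhds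
      (fun m => by have := hB m; linarith) (fun m => hA m)
  have hBt : Tendsto (fun m => B m) atTop (𝓝 t) := by
    have h1 : Tendsto (fun m => t + (B m - A m)) atTop (𝓝 (t + 0)) :=
      tendsto_const_nhds.add hd
    rw [add_zero] at h1
    refine tendsto_of_tendsto_of_tendsto_of_le_of_le tendsto_const_nhds h1
      (fun m => hB m) (fun m => by have := hA m; linarith)
  have hevA : ∀ᶠ m in atTop, dist (A m) t < δ := (Metric.tendsto_nhds.1 hAt) δ hδ
  have hevB : ∀ᶠ m in atTop, dist (B m) t < δ := (Metric.tendsto_nhds.1 hBt) δ hδ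
  filter_upwards [hevA, hevB] with m hmA hmB
  have hABm := hAB m
  have hpos : (0:ℝ) < B m - A m := by linarith
  have hq : (B m - A m)⁻¹ • ((B m - A m) • L) = L := by
    rw [smul_smul, inv_mul_cancel₀ hpos.ne', one_smul]
  have inner : (y (B m) - y t - (B m - t) • L) - (y (A m) - y t - (A m - t) • L)
      = (y (B m) - y (A m)) - (B m - A m) • L := by
    rw [show (B m - t : ℝ) = (B m - A m) + (A m - t) by ring, add_smul]
    abel
  have e1 : (B m - A m)⁻¹ • (y (B m) - y (A m)) - L
      = (B m - A m)⁻¹ • ((y (B m) - y t - (B m - t) • L) - (y (A m) - y t - (A m - t) • L)) := by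
    rw [inner]
    conv_rhs => rw [smul_sub, hq]
  have n1 : ‖y (B m) - y t - (B m - t) • L‖ ≤ ε/4 * ‖B m - t‖ := hball hmB
  have n2 : ‖y (A m) - y t - (A m - t) • L‖ ≤ ε/4 * ‖A m - t‖ := hball hmA
  have hBt' : ‖B m - t‖ ≤ B m - A m := by
    rw [Real.norm_eq_abs, abs_of_nonneg (by linarith [hB m])]
    linarith [hA m]
  have hAt' : ‖A m - t‖ ≤ B m - A m := by
    rw [Real.norm_eq_abs, abs_of_nonpos (by linarith [hA m])]
    linarith [hB m]
  calc ‖(B m - A m)⁻¹ • (y (B m) - y (A m)) - L‖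
      = ‖(B m - A m)⁻¹‖ * ‖(y (B m) - y t - (B m - t) • L) - (y (A m) - y t - (A m - t) • L)‖ := by
        rw [e1, norm_smul]
    _ ≤ (B m - A m)⁻¹ * (ε/4 * ‖B m - t‖ + ε/4 * ‖A m - t‖) := by
        rw [Real.norm_eq_abs, abs_of_pos (inv_pos.2 hpos)]
        refine mul_le_mul_of_nonneg_left ?_ (inv_pos.2 hpos).le
        exact (norm_sub_le _ _).trans (add_le_add n1 n2)
    _ ≤ (B m - A m)⁻¹ * (ε/4 * (B m - A m) + ε/4 * (B m - A m)) := by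
        refine mul_le_mul_of_nonneg_left ?_ (inv_pos.2 hpos).le
        have h4 : (0:ℝ) ≤ ε/4 := by linarith
        exact add_le_add (mul_le_mul_of_nonneg_left hBt' h4) (mul_le_mul_of_nonneg_left hAt' h4)
    _ = ε/2 := by field_simp; ring
    _ < ε := by linarith

section Partition
variable {T c : ℝ}

/-- mesh size -/
noncomputable def msh (T : ℝ) (m : ℕ) : ℝ := T / (m + 1)

/-- discrete approximations of the kinetic functional -/
noncomputable def Skin (T c : ℝ) (y : ℝ → LFE.E3) (m : ℕ) : ℝ :=
  ∑ i ∈ Finset.range (m + 1),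
    msh T m * kin c ((msh T m)⁻¹ • (y ((i + 1 : ℕ) * msh T m) - y ((i : ℕ) * msh T m)))

lemma msh_pos (hT : 0 < T) (m : ℕ) : 0 < msh T m := by
  unfold msh; positivity

lemma msh_tendsto (hT : 0 < T) : Tendsto (fun m => msh T m) atTop (𝓝 0) := by
  unfold msh
  have h0 := tendsto_one_div_add_atTop_nhds_zero_nat (𝕜 := ℝ)
  have h1 : Tendsto (fun m : ℕ => T * (1 / ((m:ℝ) + 1))) atTop (𝓝 (T * 0)) :=
    tendsto_const_nhds.mul h0
  rw [mul_zero] at h1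
  refine h1.congr fun m => by field_simp

lemma intervalIntegrable_kin_comp {c : ℝ} {g : ℝ → LFE.E3} (hy : Measurable g) (a b : ℝ) :
    IntervalIntegrable (fun t => kin c (g t)) volume a b := by
  rw [intervalIntegrable_iff]
  haveI : IsFiniteMeasure (volume.restrict (Set.uIoc a b)) := by
    constructor; rw [Measure.restrict_apply_univ]; exact measure_Ioc_lt_top
  refine Integrable.mono' (integrable_const (c^2)) ?_ ?_
  · exact ((continuous_kin c).measurable.comp hy).aestronglyMeasurable
  · refine Eventually.of_forall fun t => ?_
    rw [Real.norm_eq_abs, abs_of_nonneg (kin_nonneg _)]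
    exact kin_le _

/-- Jensen bound on partition sums. -/
lemma Skin_le (hT : 0 < T) (hc : 0 < c) {y : ℝ → LFE.E3}
    (hy : LipschitzWith (Real.toNNReal c) y) (m : ℕ) :
    Skin T c y m ≤ ∫ t in (0:ℝ)..T, kin c (deriv y t) := by
  set d := msh T m with hd
  have hdpos : 0 < d := msh_pos hT m
  set a : ℕ → ℝ := fun i => i * d with ha
  have hsplit : ∑ i ∈ Finset.range (m+1), ∫ t in a i..a (i+1), kin c (deriv y t)
      = ∫ t in (a 0)..(a (m+1)), kin c (deriv y t) := by
    refine intervalIntegral.sum_integral_adjacent_intervals fun k hk =>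
      intervalIntegrable_kin_comp (measurable_deriv y) _ _
  have ha0 : a 0 = 0 := by simp [ha]
  have ham : a (m+1) = T := by
    simp only [ha, hd]
    unfold msh
    push_cast
    field_simp
  unfold Skin
  rw [← hd, ← ha0, ← ham, ← hsplit]
  refine Finset.sum_le_sum fun i _ => ?_
  have hlt : a i < a (i+1) := by
    simp only [ha]
    have : ((i:ℝ)) < ((i:ℝ) + 1) := by linarith
    push_cast
    nlinarith
  have := jensen_piece hc hy hlt
  have hdiff : a (i+1) - a i = d := by simp only [ha]; push_cast; ring
  rw [hdiff] at this
  exact this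

end Partition

section Limits
variable {T c : ℝ}

lemma node_mem (hT : 0 < T) {m j : ℕ} (hj : j ≤ m + 1) : (j : ℝ) * msh T m ∈ Icc (0:ℝ) T := by
  have hdpos : 0 < msh T m := msh_pos hT m
  constructor
  · positivity
  · have h1 : (j : ℝ) ≤ (m : ℝ) + 1 := by exact_mod_cast hj
    have h2 : (j : ℝ) * msh T m ≤ ((m : ℝ) + 1) * msh T m :=
      mul_le_mul_of_nonneg_right h1 hdpos.le
    unfold msh at h2 ⊢
    calc (j:ℝ) * (T/((m:ℝ)+1)) ≤ ((m:ℝ)+1) * (T/((m:ℝ)+1)) := h2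
      _ = T := by field_simp

lemma Skin_tendsto_of_uniform (hT : 0 < T) {x : ℝ → LFE.E3} {xn : ℕ → ℝ → LFE.E3}
    (hconv : TendstoUniformlyOn (fun n t => xn n t) x atTop (Icc 0 T)) (m : ℕ) :
    Tendsto (fun n => Skin T c (xn n) m) atTop (𝓝 (Skin T c x m)) := by
  unfold Skin
  refine tendsto_finset_sum _ fun i hi => ?_
  have hi' : i + 1 ≤ m + 1 := by
    have := Finset.mem_range.1 hi; omega
  have h1 : Tendsto (fun n => xn n ((i + 1 : ℕ) * msh T m)) atTop
      (𝓝 (x ((i + 1 : ℕ) * msh T m))) := hconv.tendsto_at (node_mem hT hi')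
  have h2 : Tendsto (fun n => xn n ((i : ℕ) * msh T m)) atTop
      (𝓝 (x ((i : ℕ) * msh T m))) := hconv.tendsto_at (node_mem hT (by omega))
  have h3 := ((h1.sub h2).const_smul ((msh T m)⁻¹))
  exact ((((continuous_kin c).tendsto _).comp h3).const_mul _)

/-- The partition sums converge to the kinetic integral. -/
lemma Skin_tendsto_psi (hT : 0 < T) (hc : 0 < c) {x : ℝ → LFE.E3}
    (hx : LipschitzWith (Real.toNNReal c) x) :
    Tendsto (fun m => Skin T c x m) atTop (𝓝 (∫ t in (0:ℝ)..T, kin c (deriv x t))) := by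
  set G : ℕ → ℝ → LFE.E3 := fun m t =>
    (msh T m)⁻¹ • (x (((⌊t / msh T m⌋ : ℝ) + 1) * msh T m) - x ((⌊t / msh T m⌋ : ℝ) * msh T m))
    with hG
  have hxc : Continuous x := hx.continuous
  have hGmeas : ∀ m, Measurable (G m) := by
    intro m
    have hfl : Measurable fun t : ℝ => ((⌊t / msh T m⌋ : ℤ) : ℝ) :=
      Measurable.comp measurable_from_top ((measurable_id.div_const _).floor)
    fun_prop
  -- Step 1: representation of the partition sums as integrals of step functions
  have hrep : ∀ m, Skin T c x m = ∫ t in (0:ℝ)..T, kin c (G m t) := by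
    intro m
    set d := msh T m with hd
    have hdpos : 0 < d := msh_pos hT m
    set a : ℕ → ℝ := fun i => i * d with ha
    have hsplit : ∑ i ∈ Finset.range (m+1), ∫ t in a i..a (i+1), kin c (G m t)
        = ∫ t in (a 0)..(a (m+1)), kin c (G m t) :=
      intervalIntegral.sum_integral_adjacent_intervals fun k hk =>
        intervalIntegrable_kin_comp (hGmeas m) _ _
    have ha0 : a 0 = 0 := by simp [ha]
    have ham : a (m+1) = T := by
      simp only [ha, hd]
      unfold msh
      push_cast
      field_simp
    have hpiece : ∀ i : ℕ, ∫ t in a i..a (i+1), kin c (G m t)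
        = d * kin c (d⁻¹ • (x ((i + 1 : ℕ) * d) - x ((i : ℕ) * d))) := by
      intro i
      have hlt : a i < a (i+1) := by
        simp only [ha]; push_cast; nlinarith
      have hcongr : ∫ t in a i..a (i+1), kin c (G m t)
          = ∫ t in a i..a (i+1), (fun _ : ℝ => kin c (d⁻¹ • (x ((i + 1 : ℕ) * d) - x ((i : ℕ) * d)))) t := by
        refine intervalIntegral.integral_congr_ae ?_
        have h0 : ∀ᵐ (t:ℝ) ∂volume, t ≠ a (i+1) := by
          rw [ae_iff]
          have : {t : ℝ | ¬ t ≠ a (i+1)} = {a (i+1)} := by ext t; simp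
          rw [this]
          exact measure_singleton _
        filter_upwards [h0] with t htne hmem
        rw [uIoc_of_le hlt.le] at hmem
        have hlo : a i < t := hmem.1
        have hhi : t < a (i+1) := lt_of_le_of_ne hmem.2 htne
        have hfloor : ⌊t / d⌋ = (i : ℤ) := by
          rw [Int.floor_eq_iff]
          constructor
          · rw [le_div_iff₀ hdpos]
            simp only [ha] at hlo
            push_cast
            linarith
          · rw [div_lt_iff₀ hdpos]
            simp only [ha] at hhi
            push_cast at hhi ⊢
            linarith
        simp only [hG, ← hd, hfloor]
        push_cast
        ring_nf
      rw [hcongr, intervalIntegral.integral_const, smul_eq_mul]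
      congr 1
      simp only [ha]
      push_cast
      ring
    unfold Skin
    rw [← hd, ← ha0, ← ham, ← hsplit]
    exact Finset.sum_congr rfl fun i _ => (hpiece i).symm
  -- Step 2: dominated convergence
  have hdom : Tendsto (fun m => ∫ t in (0:ℝ)..T, kin c (G m t)) atTop
      (𝓝 (∫ t in (0:ℝ)..T, kin c (deriv x t))) := by
    refine intervalIntegral.tendsto_integral_filter_of_dominated_convergence (fun _ => c^2)
      (Eventually.of_forall fun m =>
        ((continuous_kin c).measurable.comp (hGmeas m)).aestronglyMeasurable)
      (Eventually.of_forall fun m => Eventually.of_forall fun t _ => by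
        rw [Real.norm_eq_abs, abs_of_nonneg (kin_nonneg _)]; exact kin_le _)
      intervalIntegrable_const ?_
    have hae : ∀ᵐ t ∂(volume : Measure ℝ), DifferentiableAt ℝ x t := hx.ae_differentiableAt
    filter_upwards [hae] with t ht _
    set A : ℕ → ℝ := fun m => (⌊t / msh T m⌋ : ℝ) * msh T m with hA
    set B : ℕ → ℝ := fun m => A m + msh T m with hB
    have hAle : ∀ m, A m ≤ t := by
      intro m
      have h1 : ((⌊t / msh T m⌋ : ℝ)) ≤ t / msh T m := Int.floor_le _
      have := mul_le_mul_of_nonneg_right h1 (msh_pos hT m).le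
      rwa [div_mul_cancel₀ _ (msh_pos hT m).ne'] at this
    have hBge : ∀ m, t ≤ B m := by
      intro m
      have h1 : t / msh T m < (⌊t / msh T m⌋ : ℝ) + 1 := Int.lt_floor_add_one _
      have h2 := mul_lt_mul_of_pos_right h1 (msh_pos hT m)
      rw [div_mul_cancel₀ _ (msh_pos hT m).ne'] at h2
      simp only [hB, hA]
      nlinarith
    have hABlt : ∀ m, A m < B m := fun m => by
      simp only [hB]; linarith [msh_pos hT m]
    have hdm : Tendsto (fun m => B m - A m) atTop (𝓝 0) := by
      have : (fun m => B m - A m) = fun m => msh T m := by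
        funext m; simp only [hB]; ring
      rw [this]
      exact msh_tendsto hT
    have hstr := straddle ht.hasDerivAt hAle hBge hABlt hdm
    have hstr2 : Tendsto (fun m => G m t) atTop (𝓝 (deriv x t)) := by
      refine hstr.congr fun m => ?_
      simp only [hG, hB, hA]
      have e1 : A m + msh T m - A m = msh T m := by ring
      rw [show (⌊t / msh T m⌋ : ℝ) * msh T m + msh T m - (⌊t / msh T m⌋ : ℝ) * msh T m
        = msh T m by ring]
      congr 2
      ring
    exact ((continuous_kin c).tendsto _).comp hstr2
  exact Tendsto.congr (fun m => (hrep m).symm) hdom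

end Limits

end Aux

/-- **Lemma.** The kinetic functional `ψ` is lower semicontinuous with respect to uniform
convergence: if `x ∈ X`, `‖ẋₙ‖_∞ ≤ c` for all `n` and `xₙ → x` uniformly on `[0,T]`, then
`‖ẋ‖_∞ ≤ c` and `ψ(x) ≤ liminf ψ(xₙ)`. -/
theorem psi_lsc_uniform_convergence
    (T c : ℝ) (hT : 0 < T) (hc : 0 < c)
    (x : ℝ → LFE.E3) (hx : LFE.MemX T x)
    (xn : ℕ → ℝ → LFE.E3) (hxn : ∀ n, LFE.MemDpsi T c (xn n))
    (hconv : TendstoUniformlyOn (fun n t => xn n t) x Filter.atTop (Set.Icc 0 T)) :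
    LipschitzWith (Real.toNNReal c) x ∧
      LFE.psiVal T c x ≤ Filter.liminf (fun n => LFE.psiVal T c (xn n)) Filter.atTop := by
  classical
  have hc0 : (0:ℝ) ≤ c := hc.le
  -- Part 1: the limit is c-Lipschitz
  have hlip : LipschitzWith (Real.toNNReal c) x := by
    refine lipschitzWith_of_periodic hT hc0 hx.1 ?_
    intro s hs t ht hst
    have hd : Filter.Tendsto (fun n => dist (xn n s) (xn n t)) Filter.atTop
        (nhds (dist (x s) (x t))) :=
      (hconv.tendsto_at hs).dist (hconv.tendsto_at ht)
    refine le_of_tendsto hd (Filter.Eventually.of_forall fun n => ?_)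
    have h1 := ((hxn n).2).dist_le_mul s t
    rw [Real.coe_toNNReal c hc0] at h1
    calc dist (xn n s) (xn n t) ≤ c * dist s t := h1
      _ = c * (t - s) := by
          rw [Real.dist_eq, abs_of_nonpos (by linarith : s - t ≤ 0)]
          ring
  refine ⟨hlip, ?_⟩
  -- Part 2: lower semicontinuity via partition sums
  have hpsival : ∀ y : ℝ → LFE.E3,
      LFE.psiVal T c y = ∫ t in (0:ℝ)..T, kin c (deriv y t) := fun y => rfl
  set L := Filter.liminf (fun n => LFE.psiVal T c (xn n)) Filter.atTop with hL
  have hSle : ∀ m, Skin T c x m ≤ L := by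
    intro m
    have h1 : ∀ n, Skin T c (xn n) m ≤ LFE.psiVal T c (xn n) := fun n => by
      rw [hpsival]
      exact Skin_le hT hc (hxn n).2 m
    have h2 : Filter.Tendsto (fun n => Skin T c (xn n) m) Filter.atTop
        (nhds (Skin T c x m)) := Skin_tendsto_of_uniform hT hconv m
    have hbdd : Filter.IsBoundedUnder (· ≥ ·) Filter.atTop
        (fun n => Skin T c (xn n) m) := h2.isBoundedUnder_ge
    have hcob : Filter.IsCoboundedUnder (· ≥ ·) Filter.atTop
        (fun n => LFE.psiVal T c (xn n)) := by
      refine Filter.IsBoundedUnder.isCoboundedUnder_ge ?_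
      refine Filter.isBoundedUnder_of ⟨c^2 * T, fun n => ?_⟩
      rw [hpsival]
      calc ∫ t in (0:ℝ)..T, kin c (deriv (xn n) t)
          ≤ ∫ _t in (0:ℝ)..T, c^2 := by
            refine intervalIntegral.integral_mono_on hT.le
              (intervalIntegrable_kin_comp (measurable_deriv _) _ _)
              intervalIntegrable_const (fun t _ => kin_le _)
        _ = c^2 * T := by
            rw [intervalIntegral.integral_const, smul_eq_mul, sub_zero, mul_comm]
    calc Skin T c x m
        = Filter.liminf (fun n => Skin T c (xn n) m) Filter.atTop := h2.liminf_eq.symm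
      _ ≤ L := Filter.liminf_le_liminf (Filter.Eventually.of_forall h1) hbdd hcob
  have hfin := Skin_tendsto_psi hT hc hlip
  rw [hpsival]
  exact le_of_tendsto hfin (Filter.Eventually.of_forall hSle)
end
end

section
/- Assume conditions (V), (AV1) and (AV2) hold. Let {x_n} ⊂ D_I be a Palais–Smale sequence for I at a level c₀ > 0, i.e. I(x_n) → c₀ and dΦ(x_n)[z − x_n] + ψ(z) − ψ(x_n) ≥ −ε_n‖z − x_n‖ for all z ∈ X and some ε_n → 0⁺. Then the sequence {x_n} is bounded in L^∞(0,T;ℝ³) (and hence, since ‖ẋ_n‖_∞ ≤ c, bounded in X). -/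
open Filter Topology Set MeasureTheory Function
open scoped ENNReal NNReal

noncomputable section

/-! ### Auxiliary lemmas for the proof -/

namespace LFE
lemma dot_eq_inner (u v : E3) : dot u v = inner (𝕜 := ℝ) u v := by
  simp [dot, toFn, PiLp.inner_apply, RCLike.inner_apply, WithLp.equiv_apply, mul_comm]

lemma abs_dot_le (u v : E3) : |dot u v| ≤ ‖u‖ * ‖v‖ := by
  rw [dot_eq_inner]; exact abs_real_inner_le_norm u v

lemma dot_add_left (u v w : E3) : dot (u + v) w = dot u w + dot v w := by
  simp [dot_eq_inner, inner_add_left]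

lemma dot_neg_left (u w : E3) : dot (-u) w = -dot u w := by
  simp [dot_eq_inner, inner_neg_left]

lemma norm_sq_eq (u : E3) : ‖u‖ ^ 2 = ∑ i, toFn u i ^ 2 := by
  rw [← real_inner_self_eq_norm_sq, ← dot_eq_inner]
  simp [dot, sq]

lemma norm_cross_le (u v : E3) : ‖cross u v‖ ≤ ‖u‖ * ‖v‖ := by
  have h1 : ‖cross u v‖ ^ 2 ≤ (‖u‖ * ‖v‖) ^ 2 := by
    rw [norm_sq_eq, mul_pow, norm_sq_eq, norm_sq_eq]
    simp only [cross, toFn, fromFn, Fin.sum_univ_three, WithLp.equiv_apply,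
      WithLp.equiv_symm_apply, PiLp.toLp_apply, WithLp.ofLp_toLp, Matrix.cons_val_zero, Matrix.cons_val_one, Matrix.head_cons,
      Matrix.cons_val_two, Matrix.tail_cons]
    nlinarith [sq_nonneg (u 0 * v 0 + u 1 * v 1 + u 2 * v 2)]
  exact (pow_le_pow_iff_left₀ (norm_nonneg _) (by positivity) two_ne_zero).mp h1
lemma e3_ext (u w : E3) (h0 : toFn u 0 = toFn w 0) (h1 : toFn u 1 = toFn w 1)
    (h2 : toFn u 2 = toFn w 2) : u = w := by
  ext j; fin_cases j; exacts [h0, h1, h2]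

lemma toFn_decomp (v : E3) : v = ∑ i, toFn v i • EuclideanSpace.single i (1:ℝ) := by
  refine e3_ext _ _ ?_ ?_ ?_ <;>
  · rw [Fin.sum_univ_three]
    simp [toFn, WithLp.equiv_apply, PiLp.add_apply, PiLp.smul_apply,
      EuclideanSpace.single_apply]

lemma toFn_apply_linear (L : E3 →L[ℝ] E3) (v : E3) (j : Fin 3) :
    toFn (L v) j = toFn v 0 * toFn (L (EuclideanSpace.single 0 1)) j
      + toFn v 1 * toFn (L (EuclideanSpace.single 1 1)) j
      + toFn v 2 * toFn (L (EuclideanSpace.single 2 1)) j := by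
  conv_lhs => rw [toFn_decomp v]
  rw [Fin.sum_univ_three, map_add, map_add, L.map_smul, L.map_smul, L.map_smul]
  simp [toFn, WithLp.equiv_apply, PiLp.add_apply, PiLp.smul_apply, mul_comm]

lemma jacT_eq (F : E3 → E3) (x v : E3) :
    jacT F x v = fderiv ℝ F x v + cross v (curl F x) := by
  set L := fderiv ℝ F x with hL
  refine e3_ext _ _ ?_ ?_ ?_ <;>
  · simp only [jacT, cross, curl, pd, dot, fromFn, toFn, Fin.sum_univ_three,
      WithLp.equiv_apply, WithLp.equiv_symm_apply, PiLp.toLp_apply, WithLp.ofLp_toLp, PiLp.add_apply,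
      Matrix.cons_val_zero, Matrix.cons_val_one, Matrix.head_cons,
      Matrix.cons_val_two, Matrix.tail_cons, ← hL]
    have hLv := toFn_apply_linear L v
    simp only [toFn, WithLp.equiv_apply] at hLv
    rw [hLv]
    ring
lemma norm_deriv_le_of_local_lip {E : Type*} [NormedAddCommGroup E] [NormedSpace ℝ E]
    {f : ℝ → E} {t η L : ℝ} (hη : 0 < η)
    (hl : ∀ s, |s - t| ≤ η → ‖f s - f t‖ ≤ L * |s - t|) : ‖deriv f t‖ ≤ L := by
  have hL : 0 ≤ L := by
    have h1 := hl (t + η) (by simp [abs_of_pos hη, hη.le])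
    have h2 : |t + η - t| = η := by simp [abs_of_pos hη]
    rw [h2] at h1
    nlinarith [norm_nonneg (f (t + η) - f t)]
  by_cases hd : DifferentiableAt ℝ f t
  · have hs := hd.hasDerivAt
    rw [hasDerivAt_iff_tendsto_slope] at hs
    have ht : Tendsto (fun s => ‖slope f t s‖) (𝓝[≠] t) (𝓝 ‖deriv f t‖) :=
      (continuous_norm.tendsto _).comp hs
    refine le_of_tendsto ht ?_
    have hev : ∀ᶠ s in 𝓝[≠] t, |s - t| ≤ η ∧ s ≠ t := by
      filter_upwards [eventually_nhdsWithin_of_eventually_nhds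
        (Metric.eventually_nhds_iff.2 ⟨η, hη, fun {y} hy => le_of_lt (by
          rwa [Real.dist_eq] at hy)⟩), eventually_mem_nhdsWithin] with s h1 h2
      exact ⟨h1, h2⟩
    filter_upwards [hev] with s ⟨h1, h2⟩
    have hst : s - t ≠ 0 := sub_ne_zero.2 h2
    rw [slope_def_module, norm_smul, norm_inv, Real.norm_eq_abs]
    calc |s - t|⁻¹ * ‖f s - f t‖ ≤ |s - t|⁻¹ * (L * |s - t|) := mul_le_mul_of_nonneg_left (hl s h1) (inv_nonneg.2 (abs_nonneg _))
      _ = L := by field_simp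
  · simp [deriv_zero_of_not_differentiableAt hd, hL]

lemma lipschitzWith_norm_deriv_le {E : Type*} [NormedAddCommGroup E] [NormedSpace ℝ E]
    {f : ℝ → E} {K : ℝ≥0} (h : LipschitzWith K f) (t : ℝ) : ‖deriv f t‖ ≤ K := by
  refine norm_deriv_le_of_local_lip one_pos (fun s _ => ?_)
  have := h.dist_le_mul s t
  rwa [dist_eq_norm, Real.dist_eq] at this

lemma hasDerivAt_partial_t {Am : ℝ × E3 → E3} {p : ℝ × E3} (h : DifferentiableAt ℝ Am p) :
    HasDerivAt (fun s => Am (s, p.2)) (fderiv ℝ Am p (1, 0)) p.1 := by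
  have h1 : HasDerivAt (fun s : ℝ => (s, p.2)) ((1:ℝ), (0:E3)) p.1 :=
    (hasDerivAt_id p.1).prodMk (hasDerivAt_const p.1 p.2)
  exact h.hasFDerivAt.comp_hasDerivAt p.1 h1

lemma hasFDerivAt_partial_x {Am : ℝ × E3 → E3} {p : ℝ × E3} (h : DifferentiableAt ℝ Am p) :
    HasFDerivAt (fun y => Am (p.1, y))
      ((fderiv ℝ Am p).comp (ContinuousLinearMap.inr ℝ ℝ E3)) p.2 := by
  exact h.hasFDerivAt.comp p.2 (hasFDerivAt_prodMk_right p.1 p.2)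

lemma fderiv_partial_x {Am : ℝ × E3 → E3} {p : ℝ × E3} (h : DifferentiableAt ℝ Am p) (v : E3) :
    fderiv ℝ (fun y => Am (p.1, y)) p.2 v = fderiv ℝ Am p (0, v) := by
  rw [(hasFDerivAt_partial_x h).fderiv]; rfl
variable {T c : ℝ} {N : ℕ}

lemma isOpen_omega (S : Setting T c N) : IsOpen (Omega N S.r) := by
  have h : Omega N S.r = ⋂ i, {p : ℝ × E3 | p.2 ≠ S.r i p.1} := by
    ext p; simp [Omega, Set.mem_iInter]
  rw [h]
  exact isOpen_iInter_of_finite fun i =>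
    isOpen_ne_fun continuous_snd (((S.hr_C1 i).continuous).comp continuous_fst)

lemma mem_omega_of_per (S : Setting T c N) {x : ℝ → E3} (hx : Periodic x T)
    (hm : ∀ t ∈ Icc 0 T, (t, x t) ∈ Omega N S.r) (t : ℝ) : (t, x t) ∈ Omega N S.r := by
  set t' := t - ⌊t / T⌋ * T with ht'
  have h0 : 0 ≤ t' := Int.sub_floor_div_mul_nonneg t S.hT
  have h1 : t' < T := Int.sub_floor_div_mul_lt t S.hT
  have hxe : x t' = x t := hx.sub_int_mul_eq _
  have hre : ∀ i, S.r i t' = S.r i t := fun i => (S.hr_per i).sub_int_mul_eq _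
  intro i
  have := hm t' ⟨h0, h1.le⟩ i
  simpa [hxe, hre] using this
lemma integral_deriv_eq_zero {h : ℝ → ℝ} {T η L : ℝ} (hT : 0 < T) (hη : 0 < η) (hL : 0 ≤ L)
    (hper : Periodic h T) (hcont : Continuous h)
    (hlip : ∀ t ∈ Icc (0:ℝ) T, ∀ s, |s - t| ≤ η → |h s - h t| ≤ L * |s - t|)
    (hdiff : ∀ᵐ t : ℝ, DifferentiableAt ℝ h t) :
    ∫ t in (0:ℝ)..T, deriv h t = 0 := by
  set δ : ℕ → ℝ := fun k => η / (k + 1) with hδ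
  have hδpos : ∀ k, 0 < δ k := fun k => div_pos hη (by positivity)
  have hδle : ∀ k, δ k ≤ η := fun k => by
    rw [hδ]
    exact div_le_self hη.le (by simp [le_add_iff_nonneg_left])
  have hδ0 : Tendsto δ atTop (𝓝 0) := by
    have h1 : Tendsto (fun n : ℕ => 1 / (n + 1 : ℝ)) atTop (𝓝 0) :=
      tendsto_one_div_add_atTop_nhds_zero_nat
    have := h1.const_mul η
    simpa [hδ, div_eq_mul_inv, mul_comm] using this
  set q : ℕ → ℝ → ℝ := fun k t => (h (t + δ k) - h t) / δ k with hq
  -- each q k has zero integral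
  have hint : ∀ k, ∫ t in (0:ℝ)..T, q k t = 0 := by
    intro k
    have hi1 : IntervalIntegrable (fun t => h (t + δ k)) volume 0 T :=
      (hcont.comp (continuous_add_right (δ k))).intervalIntegrable _ _
    have hi2 : IntervalIntegrable h volume 0 T := hcont.intervalIntegrable _ _
    have hsub : ∫ t in (0:ℝ)..T, (h (t + δ k) - h t) = 0 := by
      rw [intervalIntegral.integral_sub hi1 hi2,
        intervalIntegral.integral_comp_add_right h (δ k)]
      have := hper.intervalIntegral_add_eq (δ k) 0
      simp only [zero_add] at this
      rw [show (0:ℝ) + δ k = δ k by ring, show T + δ k = δ k + T by ring, this, sub_self]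
    calc ∫ t in (0:ℝ)..T, q k t = (∫ t in (0:ℝ)..T, (h (t + δ k) - h t)) / δ k := by
          rw [hq, intervalIntegral.integral_div]
      _ = 0 := by rw [hsub, zero_div]
  -- dominated convergence
  set μ := volume.restrict (Ioc (0:ℝ) T) with hμ
  have hmeas : ∀ k, AEStronglyMeasurable (q k) μ :=
    fun k => ((hcont.comp (continuous_add_right (δ k))).sub hcont).div_const
      (δ k) |>.aestronglyMeasurable
  have hbound : ∀ k, ∀ᵐ t ∂μ, ‖q k t‖ ≤ L := by
    intro k
    filter_upwards [ae_restrict_mem measurableSet_Ioc] with t ht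
    have h1 : |t + δ k - t| ≤ η := by
      rw [add_sub_cancel_left, abs_of_pos (hδpos k)]; exact hδle k
    have h2 := hlip t ⟨ht.1.le, ht.2⟩ (t + δ k) h1
    rw [add_sub_cancel_left, abs_of_pos (hδpos k)] at h2
    rw [Real.norm_eq_abs, hq, abs_div, abs_of_pos (hδpos k)]
    rw [div_le_iff₀ (hδpos k)]
    calc |h (t + δ k) - h t| ≤ L * δ k := h2
      _ = L * δ k := rfl
  have hlim : ∀ᵐ t ∂μ, Tendsto (fun k => q k t) atTop (𝓝 (deriv h t)) := by
    filter_upwards [ae_restrict_of_ae hdiff] with t ht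
    have hs := ht.hasDerivAt
    rw [hasDerivAt_iff_tendsto_slope] at hs
    have htt : Tendsto (fun k => t + δ k) atTop (𝓝[≠] t) := by
      rw [tendsto_nhdsWithin_iff]
      constructor
      · simpa using (tendsto_const_nhds (x := t)).add hδ0
      · exact Eventually.of_forall fun k => by
          simp [ne_eq, (hδpos k).ne']
    have := hs.comp htt
    have heq : ∀ k, slope h t (t + δ k) = q k t := by
      intro k
      rw [slope_def_field]
      congr 1 <;> simp
    have heq2 : (slope h t ∘ fun k => t + δ k) = fun k => q k t := funext fun k => heq k
    rwa [heq2] at this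
  have hdc := MeasureTheory.tendsto_integral_of_dominated_convergence
    (fun _ => L) hmeas (by
      rw [MeasureTheory.integrable_const_iff]
      right
      rw [hμ]
      exact ⟨by rw [Measure.restrict_apply_univ]; exact measure_Ioc_lt_top⟩) hbound hlim
  have hz : Tendsto (fun k : ℕ => (0:ℝ)) atTop (𝓝 (∫ t, deriv h t ∂μ)) := by
    have : (fun k : ℕ => (0:ℝ)) = fun k => ∫ t, q k t ∂μ := by
      funext k
      rw [← hint k, intervalIntegral.integral_of_le hT.le]
    rw [this]; exact hdc
  have := tendsto_nhds_unique hz tendsto_const_nhds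
  rw [intervalIntegral.integral_of_le hT.le]
  exact this.symm ▸ this
variable {T c : ℝ} {N : ℕ}

/-- Local uniform increment bound for `t ↦ A(t, x t)` along a Lipschitz path staying in `Ω`. -/
lemma A_increment (S : Setting T c N) {x : ℝ → E3}
    (hlip : LipschitzWith c.toNNReal x) (hmem : ∀ t, (t, x t) ∈ Omega N S.r) :
    ∃ η > (0:ℝ), ∃ L ≥ (0:ℝ), ∀ t ∈ Icc (-1 : ℝ) (T+1), ∀ s, |s - t| ≤ η →
      ‖S.A s (x s) - S.A t (x t)‖ ≤ L * |s - t| := by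
  have hc : (0:ℝ) ≤ c := S.hc.le
  set Am : ℝ × E3 → E3 := fun p => S.A p.1 p.2 with hAm
  set γ : ℝ → ℝ × E3 := fun t => (t, x t) with hγ
  have hγc : Continuous γ := continuous_id.prodMk hlip.continuous
  set K : Set (ℝ × E3) := γ '' Icc (-1) (T+2) with hK
  have hKc : IsCompact K := isCompact_Icc.image hγc
  have hKsub : K ⊆ Omega N S.r := by
    rintro p ⟨t, _, rfl⟩; exact hmem t
  obtain ⟨ρ, hρ, hthick⟩ := hKc.exists_thickening_subset_open (isOpen_omega S) hKsub
  set K' : Set (ℝ × E3) := Metric.cthickening (ρ/2) K with hK'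
  have hK'c : IsCompact K' := hKc.cthickening
  have hK'sub : K' ⊆ Omega N S.r :=
    (Metric.cthickening_subset_thickening' hρ (half_lt_self hρ) K).trans hthick
  have hAfc : ContinuousOn (fderiv ℝ Am) (Omega N S.r) :=
    S.hA_C1.continuousOn_fderiv_of_isOpen (isOpen_omega S) le_rfl
  obtain ⟨L₀, hL₀⟩ := hK'c.exists_bound_of_continuousOn (hAfc.mono hK'sub)
  have hdiffAm : ∀ p ∈ Omega N S.r, DifferentiableAt ℝ Am p := fun p hp =>
    (S.hA_C1.differentiableOn one_ne_zero).differentiableAt ((isOpen_omega S).mem_nhds hp)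
  refine ⟨min ((ρ/2)/(1+c)) 1, lt_min (div_pos (half_pos hρ) (by linarith)) one_pos,
    (max L₀ 0) * (1+c), by positivity, fun t ht s hs => ?_⟩
  have hγd : ∀ u v : ℝ, ‖γ u - γ v‖ ≤ (1+c) * |u - v| := by
    intro u v
    rw [Prod.norm_def]
    have h1 : ‖(γ u - γ v).1‖ = |u - v| := by simp [hγ, Real.norm_eq_abs]
    have h2 : ‖(γ u - γ v).2‖ ≤ c * |u - v| := by
      have := hlip.dist_le_mul u v
      rw [dist_eq_norm, Real.dist_eq] at this
      simpa [hγ, Real.coe_toNNReal c hc] using this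
    refine max_le ?_ ?_
    · rw [h1]; nlinarith [abs_nonneg (u - v)]
    · refine h2.trans ?_; nlinarith [abs_nonneg (u - v)]
  have hsub : ∀ u, dist u (γ t) ≤ ρ/2 → u ∈ K' := by
    intro u hu
    exact Metric.mem_cthickening_of_dist_le u (γ t) _ _ ⟨t, ⟨by linarith [ht.1], by linarith [ht.2]⟩, rfl⟩ hu
  have hγs : dist (γ s) (γ t) ≤ ρ/2 := by
    rw [dist_eq_norm]
    calc ‖γ s - γ t‖ ≤ (1+c) * |s - t| := hγd s t
      _ ≤ (1+c) * ((ρ/2)/(1+c)) := by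
          have := hs.trans (min_le_left _ _)
          nlinarith [abs_nonneg (s - t)]
      _ = ρ/2 := by rw [mul_comm]; exact div_mul_cancel₀ _ (by positivity : (0:ℝ) < 1+c).ne'
  -- mean value on the closed ball
  have hball : Metric.closedBall (γ t) (ρ/2) ⊆ K' := fun u hu =>
    hsub u (Metric.mem_closedBall.1 hu)
  have hmvt := Convex.norm_image_sub_le_of_norm_fderiv_le
    (f := Am) (C := max L₀ 0) (s := Metric.closedBall (γ t) (ρ/2))
    (fun u hu => hdiffAm u (hK'sub (hball hu)))
    (fun u hu => (hL₀ u (hball hu)).trans (le_max_left _ _))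
    (convex_closedBall _ _) (Metric.mem_closedBall_self (by positivity)) hγs
  calc ‖S.A s (x s) - S.A t (x t)‖ = ‖Am (γ s) - Am (γ t)‖ := rfl
    _ ≤ (max L₀ 0) * ‖γ s - γ t‖ := hmvt
    _ ≤ (max L₀ 0) * ((1+c) * |s - t|) := by
        exact mul_le_mul_of_nonneg_left (hγd s t) (le_max_right _ _)
    _ = (max L₀ 0) * (1+c) * |s - t| := by ring
variable {T c : ℝ} {N : ℕ}

lemma deriv_const_sub' (x : ℝ → E3) (a : E3) (t : ℝ) :
    deriv (fun s => a - x s) t = - deriv x t := by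
  by_cases hd : DifferentiableAt ℝ x t
  · exact ((hd.hasDerivAt.const_sub a)).deriv
  · have hd' : ¬ DifferentiableAt ℝ (fun s => a - x s) t := by
      intro hcon
      have := hcon.const_sub a
      simp only [sub_sub_cancel] at this
      exact hd this
    rw [deriv_zero_of_not_differentiableAt hd, deriv_zero_of_not_differentiableAt hd', neg_zero]

lemma dPhi_le (S : Setting T c N) {x : ℝ → E3}
    (hxper : Periodic x T) (hlip : LipschitzWith c.toNNReal x)
    (hmem : ∀ t, (t, x t) ∈ Omega N S.r)
    {ε' : ℝ} (hε' : 0 < ε')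
    (hb : ∀ t ∈ Icc (0:ℝ) T,
      ‖gradient (S.V t) (x t) + deriv (fun s => S.A s (x t)) t‖ ≤ ε' ∧
      ‖curl (S.A t) (x t)‖ ≤ ε') :
    dPhi T S.V S.A x (fun t => x 0 - x t) ≤ (ε' * ((1+c) * (c*T))) * T := by
  have hc : (0:ℝ) ≤ c := S.hc.le
  have hT : (0:ℝ) < T := S.hT
  set Am : ℝ × E3 → E3 := fun p => S.A p.1 p.2 with hAm
  set γ : ℝ → ℝ × E3 := fun t => (t, x t) with hγ
  set y : ℝ → E3 := fun t => x 0 - x t with hy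
  set f : ℝ → E3 := fun t => S.A t (x t) with hf
  set hh : ℝ → ℝ := fun t => dot (f t) (y t) with hhh
  have hdiffAm : ∀ t, DifferentiableAt ℝ Am (γ t) := fun t =>
    (S.hA_C1.differentiableOn one_ne_zero).differentiableAt
      ((isOpen_omega S).mem_nhds (hmem t))
  -- basic facts
  have hdx : ∀ t, ‖deriv x t‖ ≤ c := by
    intro t
    have := lipschitzWith_norm_deriv_le hlip t
    rwa [Real.coe_toNNReal c hc] at this
  have hxd : ∀ s t, ‖x s - x t‖ ≤ c * |s - t| := by
    intro s t
    have := hlip.dist_le_mul s t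
    rwa [dist_eq_norm, Real.dist_eq, Real.coe_toNNReal c hc] at this
  have hderiv_y : ∀ t, deriv y t = - deriv x t := fun t => deriv_const_sub' x (x 0) t
  have hy_norm : ∀ s t, ‖y s - y t‖ = ‖x s - x t‖ := by
    intro s t
    rw [hy]
    simp only [sub_sub_sub_cancel_left]
    rw [norm_sub_rev]
  have hy_bound : ∀ t, ‖y t‖ ≤ c * |t| := by
    intro t
    rw [hy]
    simpa [norm_sub_rev] using hxd 0 t
  -- continuity
  have hγc : Continuous γ := continuous_id.prodMk hlip.continuous
  have hfc : Continuous f := by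
    rw [continuous_iff_continuousAt]
    intro t
    exact ((hdiffAm t).continuousAt).comp (hγc.continuousAt)
  have hyc : Continuous y := continuous_const.sub hlip.continuous
  have hhc : Continuous hh := by
    have : hh = fun t => inner (𝕜 := ℝ) (f t) (y t) := by
      funext t; exact dot_eq_inner _ _
    rw [this]
    exact hfc.inner hyc
  -- periodicity of hh
  have hhper : Periodic hh T := by
    intro t
    have h1 : f (t + T) = f t := by
      rw [hf]
      simp only [hxper t, S.hA_per t (x t)]
    have h2 : y (t + T) = y t := by rw [hy]; simp [hxper t]
    rw [hhh]; simp only [h1, h2]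
  -- local Lipschitz bound for hh
  obtain ⟨η₀, hη₀, L, hL, hAinc⟩ := A_increment S hlip hmem
  obtain ⟨Mf, hMf⟩ := (isCompact_Icc (a := (-1:ℝ)) (b := T+1)).exists_bound_of_continuousOn
    hfc.continuousOn
  have hMf0 : (0:ℝ) ≤ Mf := le_trans (norm_nonneg _) (hMf 0 ⟨by linarith, by linarith⟩)
  set η := min η₀ 1 with hη
  have hηpos : 0 < η := lt_min hη₀ one_pos
  set LH := L * (c*(T+1)) + Mf * c with hLH
  have hLH0 : 0 ≤ LH := by positivity
  have hhlip : ∀ t ∈ Icc (0:ℝ) T, ∀ s, |s - t| ≤ η → |hh s - hh t| ≤ LH * |s - t| := by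
    intro t ht s hst
    have hts : t ∈ Icc (-1:ℝ) (T+1) := ⟨by linarith [ht.1], by linarith [ht.2]⟩
    have hss : |s| ≤ T + 1 := by
      have h1 : |s - t| ≤ 1 := hst.trans (min_le_right _ _)
      have := abs_sub_abs_le_abs_sub s t
      have h2 : |t| ≤ T := abs_le.2 ⟨by linarith [ht.1], ht.2⟩
      linarith
    have hfs : ‖f s - f t‖ ≤ L * |s - t| := hAinc t hts s (hst.trans (min_le_left _ _))
    have hys : ‖y s‖ ≤ c * (T+1) := by
      refine (hy_bound s).trans ?_
      exact mul_le_mul_of_nonneg_left hss hc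
    have step : hh s - hh t = dot (f s - f t) (y s) + dot (f t) (y s - y t) := by
      rw [hhh]
      simp only [dot_eq_inner, inner_sub_left, inner_sub_right]
      ring
    rw [step]
    calc |dot (f s - f t) (y s) + dot (f t) (y s - y t)|
        ≤ |dot (f s - f t) (y s)| + |dot (f t) (y s - y t)| := abs_add_le _ _
      _ ≤ ‖f s - f t‖ * ‖y s‖ + ‖f t‖ * ‖y s - y t‖ :=
          add_le_add (abs_dot_le _ _) (abs_dot_le _ _)
      _ ≤ (L * |s - t|) * (c*(T+1)) + Mf * (c * |s - t|) := by
          refine add_le_add (mul_le_mul hfs hys (norm_nonneg _) (by positivity)) ?_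
          rw [hy_norm]
          exact mul_le_mul (hMf t hts) (hxd s t) (norm_nonneg _) hMf0
      _ = LH * |s - t| := by rw [hLH]; ring
  -- a.e. differentiability and derivative formula
  have hae : ∀ᵐ t : ℝ, DifferentiableAt ℝ x t := hlip.ae_differentiableAt
  have hkey : ∀ t, DifferentiableAt ℝ x t →
      HasDerivAt hh (dot (f t) (deriv y t) +
        dot (fderiv ℝ Am (γ t) (1, deriv x t)) (y t)) t := by
    intro t hdt
    have hγd : HasDerivAt γ (1, deriv x t) t :=
      (hasDerivAt_id t).prodMk hdt.hasDerivAt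
    have hfd : HasDerivAt f (fderiv ℝ Am (γ t) (1, deriv x t)) t :=
      (hdiffAm t).hasFDerivAt.comp_hasDerivAt t hγd
    have hyd : HasDerivAt y (deriv y t) t := by
      rw [hderiv_y t]
      exact hdt.hasDerivAt.const_sub (x 0)
    have := hfd.inner (𝕜 := ℝ) hyd
    have heq : (fun t => inner (𝕜 := ℝ) (f t) (y t)) = hh := by
      funext u; exact (dot_eq_inner _ _).symm
    rw [heq] at this
    simpa [dot_eq_inner] using this
  have hhdiff : ∀ᵐ t : ℝ, DifferentiableAt ℝ hh t := by
    filter_upwards [hae] with t ht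
    exact (hkey t ht).differentiableAt
  -- integral of deriv hh vanishes
  have hintD : ∫ t in (0:ℝ)..T, deriv hh t = 0 :=
    integral_deriv_eq_zero hT hηpos hLH0 hhper hhc hhlip hhdiff
  -- the integrand of dPhi
  set G : ℝ → ℝ := fun t =>
    (-(dot (gradient (S.V t) (x t)) (y t)) + dot (S.A t (x t)) (deriv y t)
      + dot (jacT (S.A t) (x t) (deriv x t)) (y t)) with hG
  have hdPhi : dPhi T S.V S.A x (fun t => x 0 - x t) = ∫ t in (0:ℝ)..T, G t := rfl
  set CH : ℝ := ε' * ((1+c) * (c*T)) with hCH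
  have hCH0 : 0 ≤ CH := by positivity
  have hGle : ∀ t ∈ Icc (0:ℝ) T, DifferentiableAt ℝ x t → G t ≤ CH + deriv hh t := by
    intro t ht hdt
    have hD := (hkey t hdt).deriv
    have hyt : ‖y t‖ ≤ c * T := by
      refine (hy_bound t).trans ?_
      have habs : |t| ≤ T := abs_le.2 ⟨by linarith [ht.1], ht.2⟩
      exact mul_le_mul_of_nonneg_left habs hc
    have hsplit : fderiv ℝ Am (γ t) (1, deriv x t)
        = deriv (fun s => S.A s (x t)) t + fderiv ℝ (S.A t) (x t) (deriv x t) := by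
      have h1 : ((1:ℝ), deriv x t) = ((1:ℝ), (0:E3)) + ((0:ℝ), deriv x t) := by simp
      rw [h1, map_add]
      congr 1
      · exact ((hasDerivAt_partial_t (hdiffAm t)).deriv).symm
      · exact (fderiv_partial_x (hdiffAm t) (deriv x t)).symm
    have hjac := jacT_eq (S.A t) (x t) (deriv x t)
    set a1 : ℝ := dot (gradient (S.V t) (x t) + deriv (fun s => S.A s (x t)) t) (y t) with ha1
    set a2 : ℝ := dot (cross (deriv x t) (curl (S.A t) (x t))) (y t) with ha2
    have hEq : G t - deriv hh t = -a1 + a2 := by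
      rw [ha1, ha2]
      rw [hD]
      show (-(dot (gradient (S.V t) (x t)) (y t)) + dot (S.A t (x t)) (deriv y t)
        + dot (jacT (S.A t) (x t) (deriv x t)) (y t))
        - (dot (f t) (deriv y t) + dot (fderiv ℝ Am (γ t) (1, deriv x t)) (y t)) = _
      rw [hjac, hsplit]
      simp only [dot_add_left]
      have hft : f t = S.A t (x t) := rfl
      rw [hft]
      ring
    have hHb : -a1 + a2 ≤ CH := by
      have b1 : |a1| ≤ ‖gradient (S.V t) (x t) + deriv (fun s => S.A s (x t)) t‖ * ‖y t‖ :=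
        ha1 ▸ abs_dot_le _ _
      have b2 : |a2| ≤ ‖cross (deriv x t) (curl (S.A t) (x t))‖ * ‖y t‖ :=
        ha2 ▸ abs_dot_le _ _
      have b3 : ‖cross (deriv x t) (curl (S.A t) (x t))‖ ≤ c * ε' := by
        refine (norm_cross_le _ _).trans ?_
        exact mul_le_mul (hdx t) (hb t ht).2 (norm_nonneg _) hc
      have b4 := (hb t ht).1
      have hyt0 : (0:ℝ) ≤ ‖y t‖ := norm_nonneg _
      have b5 : ‖gradient (S.V t) (x t) + deriv (fun s => S.A s (x t)) t‖ * ‖y t‖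
          ≤ ε' * (c*T) := mul_le_mul b4 hyt hyt0 hε'.le
      have b6 : ‖cross (deriv x t) (curl (S.A t) (x t))‖ * ‖y t‖ ≤ (c * ε') * (c*T) :=
        mul_le_mul b3 hyt hyt0 (by positivity)
      have c1 : -a1 ≤ ε' * (c*T) := by
        have := (abs_le.1 (b1.trans b5)).1
        linarith
      have c2 : a2 ≤ (c * ε') * (c*T) := by
        have := (abs_le.1 (b2.trans b6)).2
        linarith
      calc -a1 + a2 ≤ ε' * (c*T) + (c * ε') * (c*T) := add_le_add c1 c2
        _ = CH := by rw [hCH]; ring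
    linarith [hEq, hHb]
  by_cases hGi : IntervalIntegrable G MeasureTheory.volume 0 T
  · have hD'meas : Measurable (deriv hh) := measurable_deriv hh
    have hD'int : IntervalIntegrable (deriv hh) MeasureTheory.volume 0 T := by
      rw [intervalIntegrable_iff, uIoc_of_le hT.le]
      refine Integrable.mono' (g := fun _ => LH)
        (integrableOn_const measure_Ioc_lt_top.ne)
        hD'meas.aestronglyMeasurable ?_
      filter_upwards [ae_restrict_mem measurableSet_Ioc] with t ht
      refine norm_deriv_le_of_local_lip hηpos (fun s hs => ?_)
      rw [Real.norm_eq_abs]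
      exact hhlip t ⟨ht.1.le, ht.2⟩ s hs
    have hRHSint : IntervalIntegrable (fun t => CH + deriv hh t) MeasureTheory.volume 0 T :=
      intervalIntegrable_const.add hD'int
    have haeG : (fun t => G t) ≤ᵐ[MeasureTheory.volume.restrict (Icc 0 T)]
        fun t => CH + deriv hh t := by
      filter_upwards [ae_restrict_of_ae hae, ae_restrict_mem measurableSet_Icc] with t h1 h2
      exact hGle t h2 h1
    have hmono := intervalIntegral.integral_mono_ae_restrict hT.le hGi hRHSint haeG
    rw [hdPhi]
    calc ∫ t in (0:ℝ)..T, G t ≤ ∫ t in (0:ℝ)..T, (CH + deriv hh t) := hmono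
      _ = CH * T := by
          rw [intervalIntegral.integral_add intervalIntegrable_const hD'int, hintD,
            intervalIntegral.integral_const]
          simp
          ring
      _ = (ε' * ((1+c) * (c*T))) * T := by rw [hCH]
  · rw [hdPhi, intervalIntegral.integral_undef hGi]
    positivity
variable {T c : ℝ} {N : ℕ}

lemma phiVal_le (S : Setting T c N) {x : ℝ → E3} (hlip : LipschitzWith c.toNNReal x)
    (hmem : ∀ t ∈ Icc (0:ℝ) T, (t, x t) ∈ Omega N S.r)
    (hV : CondV S) {κ' : ℝ}
    (hκ : ∀ p ∈ Omega N S.r, ‖S.A p.1 p.2‖ ≤ -(κ' / c) * S.V p.1 p.2)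
    (hκ0 : 0 < κ') {ε' : ℝ}
    (hVb : ∀ t ∈ Icc (0:ℝ) T, |S.V t (x t)| ≤ ε') :
    phiVal T S.V S.A x ≤ (1 + κ') * ε' * T := by
  have hc : (0:ℝ) < c := S.hc
  have hT : (0:ℝ) < T := S.hT
  have hε'0 : 0 ≤ ε' := le_trans (abs_nonneg _) (hVb 0 ⟨le_refl 0, hT.le⟩)
  have hdx : ∀ t, ‖deriv x t‖ ≤ c := by
    intro t
    have := lipschitzWith_norm_deriv_le hlip t
    rwa [Real.coe_toNNReal c hc.le] at this
  have hbound : ∀ t ∈ uIoc (0:ℝ) T,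
      ‖-(S.V t (x t)) + dot (S.A t (x t)) (deriv x t)‖ ≤ (1 + κ') * ε' := by
    intro t ht
    rw [uIoc_of_le hT.le] at ht
    have htI : t ∈ Icc (0:ℝ) T := ⟨ht.1.le, ht.2⟩
    have hΩ := hmem t htI
    have hVneg : S.V t (x t) < 0 := hV.1 (t, x t) hΩ
    have hVabs : |S.V t (x t)| = -(S.V t (x t)) := abs_of_neg hVneg
    have hA : ‖S.A t (x t)‖ ≤ -(κ' / c) * S.V t (x t) := hκ (t, x t) hΩ
    have hdot : |dot (S.A t (x t)) (deriv x t)| ≤ κ' * |S.V t (x t)| := by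
      refine (abs_dot_le _ _).trans ?_
      calc ‖S.A t (x t)‖ * ‖deriv x t‖ ≤ (-(κ' / c) * S.V t (x t)) * c := by
            refine mul_le_mul hA (hdx t) (norm_nonneg _) ?_
            have h0 := mul_nonneg (div_nonneg hκ0.le hc.le) (neg_nonneg.2 hVneg.le)
            nlinarith [h0]
        _ = κ' * |S.V t (x t)| := by rw [hVabs]; field_simp
    rw [Real.norm_eq_abs]
    have h1 : |(-(S.V t (x t)) : ℝ)| ≤ ε' := by rw [abs_neg]; exact hVb t htI
    have h2 : κ' * |S.V t (x t)| ≤ κ' * ε' :=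
      mul_le_mul_of_nonneg_left (hVb t htI) hκ0.le
    calc |(-(S.V t (x t)) + dot (S.A t (x t)) (deriv x t))|
        ≤ |(-(S.V t (x t)) : ℝ)| + |dot (S.A t (x t)) (deriv x t)| := abs_add_le _ _
      _ ≤ ε' + κ' * ε' := add_le_add h1 (hdot.trans h2)
      _ = (1 + κ') * ε' := by ring
  have := intervalIntegral.norm_integral_le_of_norm_le_const hbound
  rw [Real.norm_eq_abs] at this
  have habs := (abs_le.1 this).2
  calc phiVal T S.V S.A x ≤ (1 + κ') * ε' * |T - 0| := habs
    _ = (1 + κ') * ε' * T := by rw [sub_zero, abs_of_pos hT]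

lemma psiVal_const (T c : ℝ) (a : E3) : psiVal T c (fun _ => a) = 0 := by
  unfold psiVal
  have h : ∀ t : ℝ, deriv (fun _ : ℝ => a) t = 0 := fun t => deriv_const t a
  simp [h]

lemma memDpsi_const (T c : ℝ) (hc : 0 ≤ c) (a : E3) : MemDpsi T c (fun _ => a) := by
  refine ⟨⟨fun t => rfl, ⟨0, LipschitzWith.const' a⟩⟩, ?_⟩
  exact (LipschitzWith.const' a).weaken bot_le

lemma derN_le_of_deriv_bound {T c : ℝ} {x : ℝ → E3} (hc : 0 ≤ c)
    (hd : ∀ t, ‖deriv x t‖ ≤ c) : derN T x ≤ c := by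
  rw [derN, eLpNorm_exponent_top]
  refine ENNReal.toReal_le_of_le_ofReal hc ?_
  exact eLpNormEssSup_le_of_ae_bound (Filter.Eventually.of_forall hd)

lemma supN_le {T M : ℝ} {x : ℝ → E3} (hM : 0 ≤ M)
    (hb : ∀ t ∈ Icc (0:ℝ) T, ‖x t‖ ≤ M) : supN T x ≤ M := by
  refine Real.sSup_le ?_ hM
  rintro v ⟨t, ht, rfl⟩
  exact hb t ht
end LFE

/-- **Lemma (boundedness of Palais–Smale sequences).** Under (V), (AV1), (AV2), every
Palais–Smale sequence `{xₙ} ⊂ D_I` for `I` at a level `c₀ > 0` is bounded in `L^∞(0,T;ℝ³)`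
and hence bounded in `X`. -/
theorem palais_smale_sequences_bounded
    {T c : ℝ} {N : ℕ} (S : LFE.Setting T c N)
    (hV : LFE.CondV S) (hAV1 : LFE.CondAV1 S) (hAV2 : LFE.CondAV2 S)
    (c₀ : ℝ) (hc₀ : 0 < c₀)
    (x : ℕ → ℝ → LFE.E3)
    (hx : ∀ n, LFE.MemDpsi T c (x n) ∧ LFE.MemLambda T S.r (x n))
    (hI : Filter.Tendsto (fun n => LFE.psiVal T c (x n) + LFE.phiVal T S.V S.A (x n))
      Filter.atTop (nhds c₀))
    (ε : ℕ → ℝ) (hε0 : ∀ n, 0 < ε n) (hε : Filter.Tendsto ε Filter.atTop (nhds 0))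
    (hPS : ∀ n, ∀ z : ℝ → LFE.E3, LFE.MemDpsi T c z →
      -(ε n * LFE.Xdist T z (x n)) ≤
        LFE.dPhi T S.V S.A (x n) (fun t => z t - x n t)
          + LFE.psiVal T c z - LFE.psiVal T c (x n)) :
    (∃ M : ℝ, ∀ n, ∀ t ∈ Set.Icc (0:ℝ) T, ‖x n t‖ ≤ M) ∧
    ∃ M' : ℝ, ∀ n, LFE.Xnorm T (x n) ≤ M' := by
  classical
  obtain ⟨κ', hκ'0, hκ'1, hAV1'⟩ := hAV1
  have hc : (0:ℝ) < c := S.hc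
  have hT : (0:ℝ) < T := S.hT
  -- basic facts about each path
  have hlipn : ∀ n, LipschitzWith c.toNNReal (x n) := fun n => (hx n).1.2
  have hpern : ∀ n, Function.Periodic (x n) T := fun n => (hx n).1.1.1
  have hmemIn : ∀ n, ∀ t ∈ Set.Icc (0:ℝ) T, (t, x n t) ∈ LFE.Omega N S.r :=
    fun n => (hx n).2.2
  have hxd : ∀ n s t, ‖x n s - x n t‖ ≤ c * |s - t| := by
    intro n s t
    have := (hlipn n).dist_le_mul s t
    rwa [dist_eq_norm, Real.dist_eq, Real.coe_toNNReal c hc.le] at this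
  have hdxn : ∀ n t, ‖deriv (x n) t‖ ≤ c := by
    intro n t
    have := LFE.lipschitzWith_norm_deriv_le (hlipn n) t
    rwa [Real.coe_toNNReal c hc.le] at this
  -- constants
  set CC : ℝ := (1+c) * (c*T) * T + (1+κ') * T + 1 with hCC
  have hCC0 : (0:ℝ) < CC := by positivity
  set ε' : ℝ := c₀ / (4 * CC) with hε'
  have hε'0 : 0 < ε' := by positivity
  obtain ⟨R, hR⟩ := hAV2 ε' hε'0
  set R' : ℝ := max R 0 with hRdef
  have hR'0 : (0:ℝ) ≤ R' := le_max_right R 0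
  set εb : ℝ := c₀ / (8 * (c*T + c + 1)) with hεb
  have hεb0 : 0 < εb := by positivity
  -- eventual facts
  have h1 : ∀ᶠ n in Filter.atTop,
      c₀/2 < LFE.psiVal T c (x n) + LFE.phiVal T S.V S.A (x n) :=
    hI.eventually_const_lt (by linarith)
  have h2 : ∀ᶠ n in Filter.atTop, ε n < εb := hε.eventually_lt_const hεb0
  obtain ⟨n₀, hn₀⟩ := Filter.eventually_atTop.1 (h1.and h2)
  -- key claim: beyond n₀, paths come near the origin
  have key : ∀ n, n₀ ≤ n → ∃ t₀ ∈ Set.Icc (0:ℝ) T, ‖x n t₀‖ ≤ R' := by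
    intro n hn
    by_contra hcon
    push_neg at hcon
    have hmem : ∀ t, (t, x n t) ∈ LFE.Omega N S.r :=
      LFE.mem_omega_of_per S (hpern n) (hmemIn n)
    have hAV2c : ∀ t ∈ Set.Icc (0:ℝ) T,
        |S.V t (x n t)| ≤ ε' ∧
        (‖gradient (S.V t) (x n t) + deriv (fun s => S.A s (x n t)) t‖ ≤ ε' ∧
         ‖LFE.curl (S.A t) (x n t)‖ ≤ ε') := by
      intro t ht
      have hfar : R < ‖x n t‖ := lt_of_le_of_lt (le_max_left R 0) (hcon t ht)
      have hsum := hR (t, x n t) (hmem t) hfar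
      have g1 := abs_nonneg (S.V t (x n t))
      have g2 := norm_nonneg
        (gradient (S.V t) (x n t) + deriv (fun s => S.A s (x n t)) t)
      have g3 := norm_nonneg (LFE.curl (S.A t) (x n t))
      exact ⟨by linarith, by linarith, by linarith⟩
    -- PS inequality with the constant test path
    have hz' : -(ε n * LFE.Xdist T (fun _ => x n 0) (x n)) ≤
        LFE.dPhi T S.V S.A (x n) (fun t => x n 0 - x n t)
          + LFE.psiVal T c (fun _ => x n 0) - LFE.psiVal T c (x n) :=
      hPS n (fun _ => x n 0) (LFE.memDpsi_const T c hc.le (x n 0))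
    rw [LFE.psiVal_const] at hz'
    -- dPhi bound
    have hdP := LFE.dPhi_le S (hpern n) (hlipn n) hmem hε'0
      (fun t ht => (hAV2c t ht).2)
    -- Xdist bound
    have hXd : LFE.Xdist T (fun _ => x n 0) (x n) ≤ c*T + c := by
      show LFE.supN T (fun t => x n 0 - x n t) + LFE.derN T (fun t => x n 0 - x n t)
        ≤ c*T + c
      have hsup : LFE.supN T (fun t => x n 0 - x n t) ≤ c*T := by
        refine LFE.supN_le (by positivity) (fun t ht => ?_)
        have := hxd n 0 t
        have habs : |0 - t| ≤ T := by
          rw [abs_le]; constructor <;> [linarith [ht.2, hT.le]; linarith [ht.1]]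
        calc ‖x n 0 - x n t‖ ≤ c * |0 - t| := this
          _ ≤ c * T := mul_le_mul_of_nonneg_left habs hc.le
      have hder : LFE.derN T (fun t => x n 0 - x n t) ≤ c := by
        refine LFE.derN_le_of_deriv_bound hc.le (fun t => ?_)
        rw [LFE.deriv_const_sub' (x n) (x n 0) t, norm_neg]
        exact hdxn n t
      linarith
    -- phiVal bound
    have hphi := LFE.phiVal_le S (hlipn n) (hmemIn n) hV hAV1' hκ'0
      (fun t ht => (hAV2c t ht).1)
    -- assemble the contradiction
    have hεn : ε n * LFE.Xdist T (fun _ => x n 0) (x n) ≤ εb * (c*T + c) := by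
      have e1 : ε n * LFE.Xdist T (fun _ => x n 0) (x n) ≤ ε n * (c*T + c) :=
        mul_le_mul_of_nonneg_left hXd (hε0 n).le
      have e2 : ε n * (c*T + c) ≤ εb * (c*T + c) :=
        mul_le_mul_of_nonneg_right (hn₀ n hn).2.le (by positivity)
      linarith
    have hb1 : εb * (c*T + c) ≤ c₀/8 := by
      have heq : εb * (c*T + c + 1) = c₀/8 := by
        rw [hεb]; field_simp
      nlinarith [hεb0.le]
    have hb2 : (ε' * ((1+c) * (c*T))) * T + (1+κ')*ε'*T ≤ c₀/4 := by
      have heq : ε' * CC = c₀/4 := by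
        rw [hε']; field_simp
      have hexp : (ε' * ((1+c) * (c*T))) * T + (1+κ')*ε'*T = ε' * CC - ε' := by
        rw [hCC]; ring
      linarith [hε'0.le]
    have hlow := (hn₀ n hn).1
    linarith [hdP, hphi, hz', hεn, hb1, hb2, hlow]
  -- conclude: global bounds
  set M : ℝ := R' + c*T + ∑ k ∈ Finset.range n₀, (‖x k 0‖ + c*T) with hM
  have hsum0 : (0:ℝ) ≤ ∑ k ∈ Finset.range n₀, (‖x k 0‖ + c*T) :=
    Finset.sum_nonneg (fun i _ => by positivity)
  have hM0 : (0:ℝ) ≤ M := by rw [hM]; positivity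
  have hMb : ∀ n, ∀ t ∈ Set.Icc (0:ℝ) T, ‖x n t‖ ≤ M := by
    intro n t ht
    rcases le_or_gt n₀ n with hn | hn
    · obtain ⟨t₀, ht₀, hle⟩ := key n hn
      have h1 := norm_sub_norm_le (x n t) (x n t₀)
      have h2 := hxd n t t₀
      have habs : |t - t₀| ≤ T := by
        rw [abs_le]
        constructor <;> [linarith [ht.1, ht₀.2]; linarith [ht.2, ht₀.1]]
      have h3 : c * |t - t₀| ≤ c * T := mul_le_mul_of_nonneg_left habs hc.le
      have : ‖x n t‖ ≤ R' + c*T := by linarith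
      rw [hM]; linarith [hsum0]
    · have h1 := norm_sub_norm_le (x n t) (x n 0)
      have h2 := hxd n t 0
      have habs : |t - 0| ≤ T := by
        rw [abs_le]; constructor <;> [linarith [ht.1, hT.le]; linarith [ht.2]]
      have h3 : c * |t - 0| ≤ c * T := mul_le_mul_of_nonneg_left habs hc.le
      have h4 : ‖x n 0‖ + c*T ≤ ∑ k ∈ Finset.range n₀, (‖x k 0‖ + c*T) :=
        Finset.single_le_sum (f := fun k => ‖x k 0‖ + c*T)
          (fun i _ => by positivity) (Finset.mem_range.2 hn)
      rw [hM]; linarith [mul_nonneg hc.le hT.le, hR'0]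
  refine ⟨⟨M, hMb⟩, ⟨M + c, fun n => ?_⟩⟩
  have hsup : LFE.supN T (x n) ≤ M := LFE.supN_le hM0 (hMb n)
  have hder : LFE.derN T (x n) ≤ c := LFE.derN_le_of_deriv_bound hc.le (hdxn n)
  rw [LFE.Xnorm]
  linarith
end
end

section
/- Assume conditions (V), (AV1) and (AV2) hold. Then inf_{x ∈ X} I(x) = 0; more precisely I(x) > 0 for every x ∈ X, and for any sequence of constant paths x_n(t) ≡ ξ_n ∈ ℝ³ with |ξ_n| → +∞ one has I(x_n) = Φ(x_n) → 0. -/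
open Filter Topology Set MeasureTheory Function
open scoped ENNReal NNReal

noncomputable section

set_option maxHeartbeats 1000000
section Aux
open LFE

variable {T c : ℝ} {N : ℕ}

lemma LFE.dot_eq_inner_s11 (u v : E3) : dot u v = inner ℝ u v := by
  simp [dot, toFn, PiLp.inner_apply, RCLike.inner_apply, mul_comm]

lemma LFE.abs_dot_le_s11 (u v : E3) : |dot u v| ≤ ‖u‖ * ‖v‖ := by
  rw [LFE.dot_eq_inner_s11]; exact abs_real_inner_le_norm u v

lemma LFE.dot_zero_right (u : E3) : dot u 0 = 0 := by
  simp [LFE.dot_eq_inner_s11]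

lemma LFE.memX_const (ξ : E3) : MemX T (fun _ => ξ) :=
  ⟨fun _ => rfl, 0, LipschitzWith.const ξ⟩

lemma LFE.memDpsi_const_s11 (ξ : E3) : MemDpsi T c (fun _ => ξ) :=
  ⟨LFE.memX_const ξ, (LipschitzWith.const ξ).weaken zero_le⟩

lemma LFE.psiVal_const_s11 (ξ : E3) : psiVal T c (fun _ => ξ) = 0 := by
  simp [psiVal]

lemma LFE.psiVal_nonneg (hT : 0 ≤ T) (x : ℝ → E3) : 0 ≤ psiVal T c x := by
  refine intervalIntegral.integral_nonneg hT fun u _ => ?_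
  have h1 : Real.sqrt (1 - ‖deriv x u‖ ^ 2 / c ^ 2) ≤ 1 :=
    Real.sqrt_le_one.2 (by nlinarith [sq_nonneg (‖deriv x u‖ / c), div_nonneg (sq_nonneg ‖deriv x u‖) (sq_nonneg c)])
  nlinarith [sq_nonneg c]

/-- Continuity of `t ↦ V t (x t)` on `[0,T]`. -/
lemma LFE.contOn_V (S : Setting T c N) {x : ℝ → E3} (hx : Continuous x)
    (hmem : ∀ t ∈ Icc (0:ℝ) T, (t, x t) ∈ Omega N S.r) :
    ContinuousOn (fun t => S.V t (x t)) (Icc 0 T) :=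
  S.hV_C1.continuousOn.comp ((continuous_id.prodMk hx).continuousOn) hmem

lemma LFE.contOn_A (S : Setting T c N) {x : ℝ → E3} (hx : Continuous x)
    (hmem : ∀ t ∈ Icc (0:ℝ) T, (t, x t) ∈ Omega N S.r) :
    ContinuousOn (fun t => S.A t (x t)) (Icc 0 T) :=
  S.hA_C1.continuousOn.comp ((continuous_id.prodMk hx).continuousOn) hmem

lemma LFE.integrable_phi (S : Setting T c N) {x : ℝ → E3} {K : ℝ≥0} (hK : LipschitzWith K x)
    (hmem : ∀ t ∈ Icc (0:ℝ) T, (t, x t) ∈ Omega N S.r) (hT : 0 ≤ T) :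
    IntervalIntegrable (fun t => -(S.V t (x t)) + dot (S.A t (x t)) (deriv x t)) volume 0 T := by
  have hx : Continuous x := hK.continuous
  have hVc := LFE.contOn_V S hx hmem
  have hAc := LFE.contOn_A S hx hmem
  have h1 : IntervalIntegrable (fun t => -(S.V t (x t))) volume 0 T :=
    ContinuousOn.intervalIntegrable (by rw [uIcc_of_le hT]; exact hVc.neg)
  refine h1.add ?_
  have hmAe : AEStronglyMeasurable (fun t => dot (S.A t (x t)) (deriv x t))
      (volume.restrict (Ioc 0 T)) := by
    have hA' : AEStronglyMeasurable (fun t => S.A t (x t)) (volume.restrict (Ioc 0 T)) :=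
      (hAc.mono Ioc_subset_Icc_self).aestronglyMeasurable measurableSet_Ioc
    have hd : AEStronglyMeasurable (deriv x) (volume.restrict (Ioc 0 T)) :=
      (measurable_deriv x).aestronglyMeasurable
    simp_rw [LFE.dot_eq_inner_s11]
    exact hA'.inner hd
  obtain ⟨C, hC⟩ := isCompact_Icc.exists_bound_of_continuousOn hAc
  have hInt : IntegrableOn (fun t => dot (S.A t (x t)) (deriv x t)) (Ioc 0 T) := by
    refine Integrable.mono' (integrable_const (C * K)) hmAe ?_
    refine (ae_restrict_iff' measurableSet_Ioc).2 (ae_of_all _ fun t ht => ?_)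
    have h2 : ‖S.A t (x t)‖ ≤ C := hC t (Ioc_subset_Icc_self ht)
    have h3 : ‖deriv x t‖ ≤ K := norm_deriv_le_of_lipschitz hK
    calc ‖dot (S.A t (x t)) (deriv x t)‖ = |dot (S.A t (x t)) (deriv x t)| := rfl
      _ ≤ ‖S.A t (x t)‖ * ‖deriv x t‖ := LFE.abs_dot_le_s11 _ _
      _ ≤ C * K := mul_le_mul h2 h3 (norm_nonneg _) ((norm_nonneg _).trans h2)
  exact (intervalIntegrable_iff_integrableOn_Ioc_of_le hT).2 hInt

lemma LFE.lip_deriv_le {c : ℝ} (hc : 0 ≤ c) {x : ℝ → E3}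
    (h : LipschitzWith (Real.toNNReal c) x) (t : ℝ) : ‖deriv x t‖ ≤ c := by
  have h9 := norm_deriv_le_of_lipschitz (x₀ := t) h
  rwa [Real.coe_toNNReal c hc] at h9

lemma LFE.pointwise_lb {κ' c Vv : ℝ} {Av w : E3} (hc : 0 < c) (hVn : Vv < 0)
    (hAb : ‖Av‖ ≤ -(κ' / c) * Vv) (hw : ‖w‖ ≤ c) (hκ0 : 0 < κ') :
    (1 - κ') * (-Vv) ≤ -Vv + dot Av w := by
  have hdiv : 0 < κ' / c := div_pos hκ0 hc
  have habs : |dot Av w| ≤ (-(κ' / c) * Vv) * c := by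
    refine (LFE.abs_dot_le_s11 _ _).trans (mul_le_mul hAb hw (norm_nonneg _) ?_)
    nlinarith
  have h4 : (-(κ' / c) * Vv) * c = -κ' * Vv := by field_simp
  rw [h4] at habs
  have h6 := neg_abs_le (dot Av w)
  nlinarith

lemma LFE.phiVal_pos (S : Setting T c N)
    (hV : ∀ p ∈ Omega N S.r, S.V p.1 p.2 < 0) (hAV1 : CondAV1 S)
    {x : ℝ → E3} (hD : MemDpsi T c x) (hL : MemLambda T S.r x) :
    0 < phiVal T S.V S.A x := by
  obtain ⟨κ', hκ0, hκ1, hA⟩ := hAV1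
  have hc := S.hc
  have hT := S.hT
  have hmem := hL.2
  have hx : Continuous x := hD.2.continuous
  have hgc : ContinuousOn (fun t => (1 - κ') * (-(S.V t (x t)))) (Icc 0 T) :=
    continuousOn_const.mul (LFE.contOn_V S hx hmem).neg
  have hgint : IntervalIntegrable (fun t => (1 - κ') * (-(S.V t (x t)))) volume 0 T :=
    ContinuousOn.intervalIntegrable (by rw [uIcc_of_le hT.le]; exact hgc)
  have hfint := LFE.integrable_phi S hD.2 hmem hT.le
  have hle : ∀ t ∈ Icc (0:ℝ) T,
      (1 - κ') * (-(S.V t (x t))) ≤ -(S.V t (x t)) + dot (S.A t (x t)) (deriv x t) := by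
    intro t ht
    have h1 := hV _ (hmem t ht)
    have h2 := hA _ (hmem t ht)
    have h3 := LFE.lip_deriv_le hc.le hD.2 t
    exact LFE.pointwise_lb hc h1 h2 h3 hκ0
  have hmono := intervalIntegral.integral_mono_on hT.le hgint hfint hle
  have hgpos : 0 < ∫ t in (0:ℝ)..T, (1 - κ') * (-(S.V t (x t))) := by
    refine intervalIntegral.intervalIntegral_pos_of_pos_on hgint (fun t ht => ?_) hT
    have hVn : S.V t (x t) < 0 := hV _ (hmem t (Ioo_subset_Icc_self ht))
    nlinarith
  exact hgpos.trans_le hmono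


lemma LFE.exists_R (S : Setting T c N) :
    ∃ R : ℝ, ∀ i, ∀ t ∈ Icc (0:ℝ) T, ‖S.r i t‖ ≤ R := by
  have hcomp : IsCompact (⋃ i, S.r i '' Icc (0:ℝ) T) :=
    isCompact_iUnion fun i => isCompact_Icc.image (S.hr_C1 i).continuous
  obtain ⟨R, hR⟩ := hcomp.isBounded.subset_closedBall 0
  refine ⟨R, fun i t ht => ?_⟩
  have hmem : S.r i t ∈ ⋃ i, S.r i '' Icc (0:ℝ) T :=
    mem_iUnion.2 ⟨i, mem_image_of_mem _ ht⟩
  simpa [Metric.mem_closedBall, dist_zero_right] using hR hmem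

lemma LFE.memLambda_const (S : Setting T c N) {ξ : E3} {R : ℝ}
    (hR : ∀ i, ∀ t ∈ Icc (0:ℝ) T, ‖S.r i t‖ ≤ R) (hξ : R < ‖ξ‖) :
    MemLambda T S.r (fun _ => ξ) := by
  refine ⟨LFE.memX_const ξ, fun t ht i hEq => ?_⟩
  have h1 := hR i t ht
  rw [← hEq] at h1
  exact absurd hξ (not_lt.2 h1)

lemma LFE.psiE_const (ξ : E3) : psiE T c (fun _ => ξ) = (0 : EReal) := by
  rw [psiE, if_pos (LFE.memDpsi_const_s11 ξ), LFE.psiVal_const_s11]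
  exact EReal.coe_zero

lemma LFE.phiVal_const (S : Setting T c N) (ξ : E3) :
    phiVal T S.V S.A (fun _ => ξ) = ∫ t in (0:ℝ)..T, -(S.V t ξ) := by
  simp [phiVal, LFE.dot_zero_right]

lemma LFE.IE_const_eq (S : Setting T c N) {ξ : E3} (hmem : MemLambda T S.r (fun _ => ξ)) :
    IE T c S.r S.V S.A (fun _ => ξ) = ((phiVal T S.V S.A (fun _ => ξ) : ℝ) : EReal) := by
  rw [IE, LFE.psiE_const, phiE, if_pos hmem, zero_add]

lemma LFE.IE_pos (S : Setting T c N)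
    (hV : ∀ p ∈ Omega N S.r, S.V p.1 p.2 < 0) (hAV1 : CondAV1 S)
    {x : ℝ → E3} (_hX : MemX T x) :
    (0 : EReal) < IE T c S.r S.V S.A x := by
  rw [IE, psiE, phiE]
  by_cases hD : MemDpsi T c x
  · by_cases hL : MemLambda T S.r x
    · rw [if_pos hD, if_pos hL, ← EReal.coe_add]
      have h1 := LFE.psiVal_nonneg (c := c) S.hT.le x
      have h2 := LFE.phiVal_pos S hV hAV1 hD hL
      exact EReal.coe_pos.2 (by linarith)
    · rw [if_pos hD, if_neg hL, EReal.coe_add_top]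
      exact EReal.zero_lt_top
  · rw [if_neg hD, EReal.top_add_of_ne_bot]
    · exact EReal.zero_lt_top
    · by_cases hL : MemLambda T S.r x
      · rw [if_pos hL]; exact EReal.coe_ne_bot _
      · rw [if_neg hL]; exact bot_lt_top.ne'


lemma LFE.key3 (S : Setting T c N) (hAV2 : CondAV2 S)
    (ξ : ℕ → E3) (hξ : Tendsto (fun n => ‖ξ n‖) atTop atTop) :
    (∀ᶠ n in atTop, MemLambda T S.r (fun _ => ξ n) ∧
      IE T c S.r S.V S.A (fun _ => ξ n) = ((phiVal T S.V S.A (fun _ => ξ n) : ℝ) : EReal)) ∧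
    Tendsto (fun n => IE T c S.r S.V S.A (fun _ => ξ n)) atTop (𝓝 (0 : EReal)) := by
  have hT := S.hT
  obtain ⟨R, hR⟩ := LFE.exists_R S
  have hev : ∀ᶠ n in atTop, R < ‖ξ n‖ := hξ.eventually_gt_atTop R
  have heq : ∀ᶠ n in atTop, MemLambda T S.r (fun _ => ξ n) ∧
      IE T c S.r S.V S.A (fun _ => ξ n) = ((phiVal T S.V S.A (fun _ => ξ n) : ℝ) : EReal) := by
    filter_upwards [hev] with n hn
    have hmem := LFE.memLambda_const S hR hn
    exact ⟨hmem, LFE.IE_const_eq S hmem⟩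
  refine ⟨heq, ?_⟩
  have hreal : Tendsto (fun n => phiVal T S.V S.A (fun _ => ξ n)) atTop (𝓝 (0:ℝ)) := by
    rw [NormedAddCommGroup.tendsto_nhds_zero]
    intro ε hε
    have hε2 : 0 < ε / (2 * T) := div_pos hε (by linarith)
    obtain ⟨R', hR'⟩ := hAV2 (ε / (2 * T)) hε2
    have hev2 : ∀ᶠ n in atTop, max R R' < ‖ξ n‖ := hξ.eventually_gt_atTop _
    filter_upwards [hev2] with n hn
    have hΩ : ∀ t ∈ Icc (0:ℝ) T, ((t, ξ n) : ℝ × E3) ∈ Omega N S.r :=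
      (LFE.memLambda_const S hR (lt_of_le_of_lt (le_max_left _ _) hn)).2
    have hb : ∀ t ∈ Set.uIoc (0:ℝ) T,
        ‖-(S.V t (ξ n)) + dot (S.A t (ξ n)) (deriv (fun _ => ξ n) t)‖ ≤ ε / (2 * T) := by
      intro t ht
      have ht' : t ∈ Icc (0:ℝ) T := by
        rw [uIoc_of_le hT.le] at ht; exact Ioc_subset_Icc_self ht
      have hΩt := hΩ t ht'
      have h5 := hR' _ hΩt (lt_of_le_of_lt (le_max_right _ _) hn)
      have g1 := norm_nonneg (gradient (S.V (t, ξ n).1) (t, ξ n).2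
        + deriv (fun s => S.A s (t, ξ n).2) (t, ξ n).1)
      have g2 := norm_nonneg (curl (S.A (t, ξ n).1) (t, ξ n).2)
      have h6 : |S.V t (ξ n)| ≤ ε / (2 * T) := by
        simp only at h5 g1 g2; linarith
      simpa [LFE.dot_zero_right, abs_neg] using h6
    have hbound := intervalIntegral.norm_integral_le_of_norm_le_const hb
    rw [phiVal]
    refine lt_of_le_of_lt hbound ?_
    rw [sub_zero, abs_of_pos hT]
    have heqv : ε / (2 * T) * T = ε / 2 := by field_simp
    rw [heqv]
    linarith
  have hcoe : Tendsto (fun n => ((phiVal T S.V S.A (fun _ => ξ n) : ℝ) : EReal))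
      atTop (𝓝 (0 : EReal)) := by
    rw [← EReal.coe_zero]
    exact EReal.tendsto_coe.2 hreal
  exact hcoe.congr' (heq.mono fun n hn => hn.2.symm)

end Aux

/-- **Lemma (infimum of the action).** Under (V < 0 on Ω), (AV1) and (AV2):
`inf_X I = 0`, `I > 0` on `X`, and along constant paths `xₙ ≡ ξₙ` with `|ξₙ| → ∞` one has
(eventually) `I(xₙ) = Φ(xₙ)` and `I(xₙ) → 0`. -/
theorem inf_action_is_zero
    {T c : ℝ} {N : ℕ} (S : LFE.Setting T c N)
    (hV : ∀ p ∈ LFE.Omega N S.r, S.V p.1 p.2 < 0)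
    (hAV1 : LFE.CondAV1 S) (hAV2 : LFE.CondAV2 S) :
    (⨅ x : {x : ℝ → LFE.E3 // LFE.MemX T x}, LFE.IE T c S.r S.V S.A x.1) = (0 : EReal) ∧
    (∀ x : ℝ → LFE.E3, LFE.MemX T x → (0 : EReal) < LFE.IE T c S.r S.V S.A x) ∧
    ∀ ξ : ℕ → LFE.E3, Filter.Tendsto (fun n => ‖ξ n‖) Filter.atTop Filter.atTop →
      (∀ᶠ n in Filter.atTop,
        LFE.MemLambda T S.r (fun _ => ξ n) ∧
        LFE.IE T c S.r S.V S.A (fun _ => ξ n)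
          = ((LFE.phiVal T S.V S.A (fun _ => ξ n) : ℝ) : EReal)) ∧
      Filter.Tendsto (fun n => LFE.IE T c S.r S.V S.A (fun _ => ξ n)) Filter.atTop
        (nhds (0 : EReal)) := by
  have hpos : ∀ x : ℝ → LFE.E3, LFE.MemX T x → (0 : EReal) < LFE.IE T c S.r S.V S.A x :=
    fun x hx => LFE.IE_pos S hV hAV1 hx
  refine ⟨?_, hpos, fun ξ hξ => LFE.key3 S hAV2 ξ hξ⟩
  have h0le : (0 : EReal) ≤ ⨅ x : {x : ℝ → LFE.E3 // LFE.MemX T x}, LFE.IE T c S.r S.V S.A x.1 :=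
    le_iInf fun x => (hpos x.1 x.2).le
  have hξ : Filter.Tendsto
      (fun n : ℕ => ‖((n : ℝ) • EuclideanSpace.single 0 (1:ℝ) : LFE.E3)‖)
      Filter.atTop Filter.atTop := by
    have hn : (fun n : ℕ => ‖((n : ℝ) • EuclideanSpace.single 0 (1:ℝ) : LFE.E3)‖)
        = fun n : ℕ => (n : ℝ) := by
      funext n; simp [norm_smul, EuclideanSpace.norm_single]
    rw [hn]
    exact tendsto_natCast_atTop_atTop
  obtain ⟨-, htend⟩ := LFE.key3 S hAV2
    (fun n : ℕ => ((n : ℝ) • EuclideanSpace.single 0 (1:ℝ) : LFE.E3)) hξ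
  have hle0 : (⨅ x : {x : ℝ → LFE.E3 // LFE.MemX T x}, LFE.IE T c S.r S.V S.A x.1)
      ≤ (0 : EReal) := by
    refine ge_of_tendsto' htend fun n => ?_
    exact iInf_le (fun x : {x : ℝ → LFE.E3 // LFE.MemX T x} => LFE.IE T c S.r S.V S.A x.1)
      ⟨fun _ => ((n : ℝ) • EuclideanSpace.single 0 (1:ℝ) : LFE.E3), LFE.memX_const _⟩
  exact le_antisymm hle0 h0le
end
end

section
/- Let r : ℝ → ℝ³ be a T-periodic C¹ function with ‖ṙ‖_∞ < c, and let (t,x) ∈ ℝ × ℝ³ with x ≠ r(s) for all s. Then there exists a unique t_r ∈ ℝ (the retarded time) such that t_r = t − |x − r(t_r)|/c. Moreover, the map (t,x) ↦ t_r(t,x) satisfies t_r(t+T, x) = t_r(t,x) + T for all such (t,x). -/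
open Function

noncomputable section

/-- `ℝ³` with the Euclidean norm. -/
abbrev E3 : Type := EuclideanSpace ℝ (Fin 3)

/-- **Lemma (retarded time).** If `r` is a `T`-periodic `C¹` curve with `‖ṙ‖_∞ < c` and
`x ≠ r(s)` for all `s`, then for every `t` there is a unique retarded time `t_r` with
`t_r = t - |x - r(t_r)|/c`; moreover `t_r(t + T, x) = t_r(t, x) + T`. -/
theorem retarded_time_exists_unique
    (T c : ℝ) (hT : 0 < T) (hc : 0 < c)
    (r : ℝ → E3) (hper : Periodic r T) (hC1 : ContDiff ℝ 1 r)
    (hspeed : ∃ b, b < c ∧ ∀ s, ‖deriv r s‖ ≤ b) :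
    (∀ (t : ℝ) (x : E3), (∀ s, x ≠ r s) →
      ∃! tr : ℝ, tr = t - ‖x - r tr‖ / c) ∧
    ∀ (t : ℝ) (x : E3), (∀ s, x ≠ r s) → ∀ tr tr' : ℝ,
      tr = t - ‖x - r tr‖ / c → tr' = (t + T) - ‖x - r tr'‖ / c → tr' = tr + T := by
  obtain ⟨b, hbc, hb⟩ := hspeed
  have hb0 : 0 ≤ b := le_trans (norm_nonneg _) (hb 0)
  set K : NNReal := ⟨b / c, div_nonneg hb0 hc.le⟩ with hKdef
  have hK1 : K < 1 := by
    rw [← NNReal.coe_lt_coe]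
    show b / c < 1
    rwa [div_lt_one hc]
  have hrlip : LipschitzWith (NNReal.mk b hb0) r :=
    lipschitzWith_of_nnnorm_deriv_le (hC1.differentiable one_ne_zero)
      (fun s => by rw [← NNReal.coe_le_coe]; exact hb s)
  have key : ∀ (t : ℝ) (x : E3), ∃! tr : ℝ, tr = t - ‖x - r tr‖ / c := by
    intro t x
    set f : ℝ → ℝ := fun s => t - ‖x - r s‖ / c with hf
    have hlip : LipschitzWith K f := by
      apply LipschitzWith.of_dist_le_mul
      intro a a'
      have h1 : f a - f a' = (‖x - r a'‖ - ‖x - r a‖) / c := by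
        simp only [hf]; ring
      have h2 : |‖x - r a'‖ - ‖x - r a‖| ≤ ‖r a - r a'‖ := by
        have := abs_norm_sub_norm_le (x - r a') (x - r a)
        simpa [sub_sub_sub_cancel_left] using this
      have h3 : ‖r a - r a'‖ ≤ b * |a - a'| := by
        have := hrlip.dist_le_mul a a'
        simpa [dist_eq_norm, Real.dist_eq] using this
      calc dist (f a) (f a') = |(‖x - r a'‖ - ‖x - r a‖) / c| := by
              rw [Real.dist_eq, h1]
        _ = |‖x - r a'‖ - ‖x - r a‖| / c := by
              rw [abs_div, abs_of_pos hc]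
        _ ≤ (b * |a - a'|) / c := by
              apply div_le_div_of_nonneg_right (le_trans h2 h3) hc.le
        _ = (b / c) * |a - a'| := by ring
        _ = (K : ℝ) * dist a a' := by rw [Real.dist_eq]; rfl
    have hcon : ContractingWith K f := ⟨hK1, hlip⟩
    refine ⟨hcon.fixedPoint f, (hcon.fixedPoint_isFixedPt).symm, ?_⟩
    intro y hy
    exact hcon.fixedPoint_unique hy.symm
  refine ⟨fun t x _ => key t x, fun t x _ tr tr' h1 h2 => ?_⟩
  have h3 : tr + T = (t + T) - ‖x - r (tr + T)‖ / c := by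
    rw [hper tr]
    linarith [h1]
  exact (key (t + T) x).unique h2 h3
end
end
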